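/- arXiv:1904.04904 — 6 statements merged into one kernel-verified Lean document; each statement's English description precedes it below -/
import Mathlib

section
/- Let m ≥ 1 and let a_1, …, a_{m+1} ∈ ℝ[X] satisfy a_i(0) = 0 for all i and a_1 ≺₊ a_2 ≺₊ ⋯ ≺₊ a_{m+1}. Set e_i := ord(a_{i+1} − a_i) for 1 ≤ i ≤ m, and for 1 ≤ i ≤ m let T_i ∈ ℝ[X] be the unique polynomial with T_i(x) = ∫_{a_i(x)}^{a_{i+1}(x)} ∏_{ℓ=1}^{m+1} (t − a_ℓ(x)) dt for all x ∈ ℝ. Suppose k, ℓ ∈ {1,…,m} with k ≠ ℓ, and that e_k < e_j for every index j lying between min(k,ℓ) and max(k,ℓ) inclusive with j ≠ k. Then ord(T_k) < ord(T_ℓ); consequently there exists x₀ > 0 such that |T_ℓ(x)| < |T_k(x)| for all 0 < x < x₀. -/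
open Polynomial

/-- `P ≺₊ Q`: `P(x) < Q(x)` for all sufficiently small `x > 0`. -/
def PrecPlus (P Q : Polynomial ℝ) : Prop :=
  ∃ x₀ > (0 : ℝ), ∀ x : ℝ, 0 < x → x < x₀ → P.eval x < Q.eval x

open Filter Topology MeasureTheory intervalIntegral

section Aux

lemma precPlus_eventually {P Q : Polynomial ℝ} (h : PrecPlus P Q) :
    ∀ᶠ x in 𝓝[>] (0:ℝ), P.eval x < Q.eval x := by
  obtain ⟨x₀, hx₀, h⟩ := h
  have hIoo : Set.Ioo (0:ℝ) x₀ ∈ 𝓝[>] (0:ℝ) :=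
    Ioo_mem_nhdsGT_of_mem ⟨le_rfl, hx₀⟩
  filter_upwards [hIoo] with x hx
  exact h x hx.1 hx.2

lemma precPlus_trans {P Q R : Polynomial ℝ} (h1 : PrecPlus P Q) (h2 : PrecPlus Q R) :
    PrecPlus P R := by
  obtain ⟨x₀, hx₀, h1⟩ := h1
  obtain ⟨x₁, hx₁, h2⟩ := h2
  exact ⟨min x₀ x₁, lt_min hx₀ hx₁, fun x hx hx' =>
    (h1 x hx (lt_of_lt_of_le hx' (min_le_left _ _))).trans
      (h2 x hx (lt_of_lt_of_le hx' (min_le_right _ _)))⟩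

lemma precPlus_ne {P Q : Polynomial ℝ} (h : PrecPlus P Q) : P ≠ Q := by
  obtain ⟨x₀, hx₀, h⟩ := h
  intro hPQ
  have := h (x₀/2) (by linarith) (by linarith)
  rw [hPQ] at this
  exact lt_irrefl _ this

lemma chain_lt (m : ℕ) (a : ℕ → Polynomial ℝ)
    (hchain : ∀ i, 1 ≤ i → i ≤ m → PrecPlus (a i) (a (i + 1))) :
    ∀ p q, 1 ≤ p → p < q → q ≤ m + 1 → PrecPlus (a p) (a q) := by
  intro p q hp hpq hq
  induction q, hpq using Nat.le_induction with
  | base => exact hchain p hp (by omega)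
  | succ q hpq ih =>
    exact precPlus_trans (ih (by omega)) (hchain q (by omega) (by omega))

/-- limit of eventually-nonnegative polynomial values from the right at 0. -/
lemma eval0_nonneg_of_ev (p : Polynomial ℝ)
    (h : ∀ᶠ x in 𝓝[>] (0:ℝ), 0 ≤ p.eval x) : 0 ≤ p.eval 0 := by
  have ht : Filter.Tendsto (fun x => p.eval x) (𝓝[>] (0:ℝ)) (𝓝 (p.eval 0)) :=
    (p.continuous.tendsto 0).mono_left nhdsWithin_le_nhds
  exact ge_of_tendsto ht h

lemma exists_factor (p : Polynomial ℝ) (hp : p ≠ 0) :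
    ∃ q : Polynomial ℝ, p = X ^ (rootMultiplicity 0 p) * q ∧ q.eval 0 ≠ 0 := by
  obtain ⟨q, hq, hnd⟩ := p.exists_eq_pow_rootMultiplicity_mul_and_not_dvd hp 0
  refine ⟨q, by simpa using hq, ?_⟩
  intro h0
  have : (X - C 0 : Polynomial ℝ) ∣ q := (dvd_iff_isRoot (p := q) (a := 0)).2 h0
  exact hnd (by simpa using this)

lemma rm_X_pow_mul (N : ℕ) (g : Polynomial ℝ) (hg : g.eval 0 ≠ 0) :
    rootMultiplicity 0 (X ^ N * g) = N := by
  have hgne : g ≠ 0 := fun h => hg (by simp [h])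
  have hne : (X : Polynomial ℝ) ^ N * g ≠ 0 := mul_ne_zero (pow_ne_zero _ X_ne_zero) hgne
  have hle : N ≤ rootMultiplicity 0 (X ^ N * g) := by
    rw [le_rootMultiplicity_iff hne]
    simpa using Dvd.intro g rfl
  have hge : rootMultiplicity 0 (X ^ N * g) ≤ N := by
    rw [rootMultiplicity_le_iff hne]
    intro hdvd
    simp only [C_0, sub_zero] at hdvd
    rw [pow_succ] at hdvd
    have hXg : (X : Polynomial ℝ) ∣ g := by
      have hX : (X : Polynomial ℝ) ^ N ≠ 0 := pow_ne_zero _ X_ne_zero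
      exact (mul_dvd_mul_iff_left hX).1 hdvd
    have : (X - C 0 : Polynomial ℝ) ∣ g := by simpa using hXg
    exact hg ((dvd_iff_isRoot (p := g) (a := 0)).1 this)
  omega

lemma rm_neg (p : Polynomial ℝ) : rootMultiplicity 0 (-p) = rootMultiplicity 0 p := by
  rcases eq_or_ne p 0 with rfl | hp
  · simp
  · have hnp : -p ≠ 0 := neg_ne_zero.mpr hp
    apply le_antisymm
    · rw [le_rootMultiplicity_iff hp (a := 0)]
      have := pow_rootMultiplicity_dvd (-p) 0
      exact (dvd_neg (α := Polynomial ℝ)).1 this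
    · rw [le_rootMultiplicity_iff hnp (a := 0)]
      exact (dvd_neg (α := Polynomial ℝ)).2 (pow_rootMultiplicity_dvd p 0)

lemma dvd_telescope (a : ℕ → Polynomial ℝ) (n : ℕ) (k l : ℕ) (hkl : k ≤ l)
    (h : ∀ j, k ≤ j → j < l → (X : Polynomial ℝ) ^ n ∣ a (j + 1) - a j) :
    (X : Polynomial ℝ) ^ n ∣ a l - a k := by
  induction l, hkl using Nat.le_induction with
  | base => simp
  | succ l hkl ih =>
    have h1 : (X : Polynomial ℝ) ^ n ∣ a (l + 1) - a l := h l hkl (by omega)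
    have h2 := ih (fun j hj hj' => h j hj (by omega))
    have := dvd_add h1 h2
    simpa [sub_add_sub_cancel] using this

/-- the "average over `[0,1]`" of a polynomial in `Y` with coefficients in `ℝ[X]`. -/
noncomputable def Javg (n : ℕ) (q : Polynomial (Polynomial ℝ)) : Polynomial ℝ :=
  ∑ j ∈ Finset.range n, C (((j : ℝ) + 1)⁻¹) * q.coeff j

lemma Javg_C_mul (n : ℕ) (p : Polynomial ℝ) (q : Polynomial (Polynomial ℝ)) :
    Javg n (Polynomial.C p * q) = p * Javg n q := by
  simp only [Javg, coeff_C_mul, Finset.mul_sum]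
  exact Finset.sum_congr rfl (fun j _ => by ring)

lemma Javg_eval (n : ℕ) (q : Polynomial (Polynomial ℝ)) (h : q.natDegree < n) (x : ℝ) :
    (∫ u in (0:ℝ)..1, (q.map (evalRingHom x)).eval u) = (Javg n q).eval x := by
  set p := q.map (evalRingHom x) with hp
  have hd : p.natDegree < n := lt_of_le_of_lt natDegree_map_le h
  have heval : ∀ u : ℝ, p.eval u = ∑ j ∈ Finset.range n, p.coeff j * u ^ j :=
    fun u => eval_eq_sum_range' hd u
  rw [intervalIntegral.integral_congr (g := fun u => ∑ j ∈ Finset.range n, p.coeff j * u ^ j)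
    (fun u _ => heval u)]
  rw [intervalIntegral.integral_finset_sum (f := fun j u => p.coeff j * u ^ j) (fun j _ =>
    ((continuous_const.mul (continuous_pow j)).intervalIntegrable _ _))]
  have : ∀ j ∈ Finset.range n, (∫ u in (0:ℝ)..1, p.coeff j * u ^ j)
      = ((j:ℝ) + 1)⁻¹ * p.coeff j := by
    intro j _
    rw [intervalIntegral.integral_const_mul, integral_pow]
    have hj : ((j:ℝ) + 1) ≠ 0 := by positivity
    field_simp
    simp
  rw [Finset.sum_congr rfl this]
  simp only [Javg, eval_finset_sum, eval_mul, eval_C, hp, coeff_map]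
  exact Finset.sum_congr rfl (fun j _ => by simp [coeff_map, mul_comm])

/-- the exponent `min(e_i, ord(a_i - a_ℓ))`. -/
noncomputable def muExp (a : ℕ → Polynomial ℝ) (i ℓ : ℕ) : ℕ :=
  if ℓ = i then rootMultiplicity 0 (a (i + 1) - a i)
  else min (rootMultiplicity 0 (a (i + 1) - a i)) (rootMultiplicity 0 (a i - a ℓ))

lemma muExp_le (a : ℕ → Polynomial ℝ) (i ℓ : ℕ) :
    muExp a i ℓ ≤ rootMultiplicity 0 (a (i + 1) - a i) := by
  unfold muExp; split
  · exact le_rfl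
  · exact min_le_left _ _

lemma X_pow_muExp_dvd (a : ℕ → Polynomial ℝ) (i ℓ : ℕ) :
    (X : Polynomial ℝ) ^ (muExp a i ℓ) ∣ a i - a ℓ := by
  unfold muExp; split
  · subst ‹ℓ = i›; simp
  · have := pow_rootMultiplicity_dvd (a i - a ℓ) 0
    simp only [C_0, sub_zero] at this
    exact dvd_trans (pow_dvd_pow _ (min_le_right _ _)) this

lemma le_muExp (a : ℕ → Polynomial ℝ) (i ℓ : ℕ) (n : ℕ)
    (hne : ℓ ≠ i → a i - a ℓ ≠ 0)
    (h1 : n ≤ rootMultiplicity 0 (a (i + 1) - a i))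
    (h2 : (X : Polynomial ℝ) ^ n ∣ a i - a ℓ) : n ≤ muExp a i ℓ := by
  unfold muExp; split
  · exact h1
  · rename_i hli
    refine le_min h1 ?_
    rw [le_rootMultiplicity_iff (hne hli)]
    simpa using h2

/-- the affine positivity lemma. -/
lemma affine_pos {A B : ℝ} (hAB : ¬(A = 0 ∧ B = 0))
    (h : ∀ u : ℝ, 0 < u → u < 1 → 0 ≤ A + u * B) :
    ∀ u : ℝ, 0 < u → u < 1 → 0 < A + u * B := by
  intro u hu hu1
  rcases lt_or_eq_of_le (h u hu hu1) with hlt | heq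
  · exact hlt
  · exfalso
    have h1 := h (u / 2) (by linarith) (by linarith)
    have h2 := h ((u + 1) / 2) (by linarith) (by linarith)
    have hB : B = 0 := by nlinarith
    have hA : A = 0 := by nlinarith
    exact hAB ⟨hA, hB⟩

end Aux

/-- Key analytic lemma: exact factorization of the area polynomial. -/
lemma key_factor (m : ℕ) (a : ℕ → Polynomial ℝ)
    (hchain : ∀ i, 1 ≤ i → i ≤ m → PrecPlus (a i) (a (i + 1)))
    (i : ℕ) (hi1 : 1 ≤ i) (him : i ≤ m)
    (T : Polynomial ℝ)
    (hT : ∀ x : ℝ, T.eval x =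
      ∫ t in ((a i).eval x)..((a (i + 1)).eval x),
        ∏ ℓ ∈ Finset.Icc 1 (m + 1), (t - (a ℓ).eval x)) :
    ∃ g : Polynomial ℝ,
      T = X ^ (rootMultiplicity 0 (a (i + 1) - a i)
        + ∑ ℓ ∈ Finset.Icc 1 (m + 1), muExp a i ℓ) * g ∧ g.eval 0 ≠ 0 := by
  classical
  set e := rootMultiplicity 0 (a (i + 1) - a i) with he
  set δ : Polynomial ℝ := a (i + 1) - a i with hδdef
  have hprec : PrecPlus (a i) (a (i + 1)) := hchain i hi1 him
  have hδne : δ ≠ 0 := by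
    intro h
    exact precPlus_ne hprec (by rw [hδdef] at h; linear_combination (norm := ring_nf) -h)
  obtain ⟨d, hd, hd0⟩ := exists_factor δ hδne
  rw [← he] at hd
  have hδev : ∀ᶠ x in 𝓝[>] (0:ℝ), 0 < δ.eval x := by
    filter_upwards [precPlus_eventually hprec] with x hx
    rw [hδdef, eval_sub]; linarith
  have hd0pos : 0 < d.eval 0 := by
    rcases lt_or_gt_of_ne hd0 with h | h
    · exfalso
      have hnn : 0 ≤ d.eval 0 := by
        apply eval0_nonneg_of_ev
        filter_upwards [hδev, self_mem_nhdsWithin] with x h1 h2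
        have hx : (0:ℝ) < x := h2
        have hev : δ.eval x = x ^ e * d.eval x := by rw [hd]; simp
        nlinarith [pow_pos hx e]
      linarith
    · exact h
  have hμle : ∀ ℓ, muExp a i ℓ ≤ e := muExp_le a i
  have hane : ∀ p q, 1 ≤ p → 1 ≤ q → p ≤ m + 1 → q ≤ m + 1 → p ≠ q → a p - a q ≠ 0 := by
    intro p q hp hq hpm hqm hpq
    rcases lt_or_gt_of_ne hpq with h | h
    · have := precPlus_ne (chain_lt m a hchain p q hp h hqm)
      exact fun hc => this (by linear_combination (norm := ring_nf) hc)
    · have := precPlus_ne (chain_lt m a hchain q p hq h hpm)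
      exact fun hc => this (by linear_combination (norm := ring_nf) -hc)
  have hrex : ∀ ℓ ∈ Finset.Icc 1 (m + 1), ∃ rr : Polynomial ℝ,
      a i - a ℓ = X ^ (muExp a i ℓ) * rr ∧ (muExp a i ℓ = e ∨ rr.eval 0 ≠ 0) := by
    intro ℓ hℓ
    simp only [Finset.mem_Icc] at hℓ
    rcases eq_or_ne ℓ i with rfl | hℓi
    · refine ⟨0, by simp, Or.inl (by simp [muExp, he, hδdef])⟩
    · have hnz : a i - a ℓ ≠ 0 := hane i ℓ hi1 hℓ.1 (by omega) hℓ.2 (Ne.symm hℓi)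
      obtain ⟨q, hq, hq0⟩ := exists_factor _ hnz
      rcases le_or_gt (rootMultiplicity 0 (a i - a ℓ)) e with hrme | herm
      · have hμ : muExp a i ℓ = rootMultiplicity 0 (a i - a ℓ) := by
          simp only [muExp, if_neg hℓi, ← he]
          omega
        exact ⟨q, by rw [hμ]; exact hq, Or.inr hq0⟩
      · have hμ : muExp a i ℓ = e := by
          simp only [muExp, if_neg hℓi, ← he]
          omega
        refine ⟨X ^ (rootMultiplicity 0 (a i - a ℓ) - e) * q, ?_, Or.inl hμ⟩
        rw [hμ, ← mul_assoc, ← pow_add,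
          show e + (rootMultiplicity 0 (a i - a ℓ) - e) = rootMultiplicity 0 (a i - a ℓ)
            from by omega]
        exact hq
  choose! r hr1 hr2 using hrex
  set G : ℕ → Polynomial (Polynomial ℝ) := fun ℓ =>
    Polynomial.C (r ℓ) + Polynomial.C ((X : Polynomial ℝ) ^ (e - muExp a i ℓ) * d) * Polynomial.X
    with hGdef
  set W' : Polynomial (Polynomial ℝ) := ∏ ℓ ∈ Finset.Icc 1 (m + 1), G ℓ with hW'def
  set W : Polynomial (Polynomial ℝ) := ∏ ℓ ∈ Finset.Icc 1 (m + 1),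
    (Polynomial.C (a i - a ℓ) + Polynomial.C δ * Polynomial.X) with hWdef
  have hdeg1 : ∀ (p q : Polynomial ℝ),
      (Polynomial.C p + Polynomial.C q * Polynomial.X : Polynomial (Polynomial ℝ)).natDegree ≤ 1 := by
    intro p q
    refine le_trans (natDegree_add_le _ _) ?_
    simp only [natDegree_C, max_le_iff]
    exact ⟨by omega, le_trans natDegree_mul_le (by simp)⟩
  have hdegprod : ∀ F : ℕ → Polynomial (Polynomial ℝ),
      (∀ ℓ ∈ Finset.Icc 1 (m + 1), (F ℓ).natDegree ≤ 1) →
      (∏ ℓ ∈ Finset.Icc 1 (m + 1), F ℓ).natDegree < m + 2 := by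
    intro F hF
    have h1 := natDegree_prod_le (Finset.Icc 1 (m + 1)) F
    have h2 : ∑ ℓ ∈ Finset.Icc 1 (m + 1), (F ℓ).natDegree ≤ (Finset.Icc 1 (m + 1)).card * 1 := by
      apply Finset.sum_le_card_nsmul
      exact hF
    rw [Nat.card_Icc] at h2
    omega
  have hdegW : W.natDegree < m + 2 := by
    rw [hWdef]
    exact hdegprod _ (fun ℓ _ => hdeg1 _ _)
  have hdegW' : W'.natDegree < m + 2 := by
    rw [hW'def]
    exact hdegprod _ (fun ℓ _ => by simp only [hGdef]; exact hdeg1 _ _)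
  -- factor the product
  have hfac : ∀ ℓ ∈ Finset.Icc 1 (m + 1),
      (Polynomial.C (a i - a ℓ) + Polynomial.C δ * Polynomial.X : Polynomial (Polynomial ℝ))
        = Polynomial.C ((X : Polynomial ℝ) ^ (muExp a i ℓ)) * G ℓ := by
    intro ℓ hℓ
    rw [hr1 ℓ hℓ, hd, hGdef]
    rw [show (X : Polynomial ℝ) ^ e = X ^ (muExp a i ℓ) * X ^ (e - muExp a i ℓ) from by
      rw [← pow_add]; congr 1; have := hμle ℓ; omega]
    simp only [C_mul]
    ring
  have hWfac : W = Polynomial.C ((X : Polynomial ℝ) ^ (∑ ℓ ∈ Finset.Icc 1 (m + 1), muExp a i ℓ))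
      * W' := by
    rw [hWdef, Finset.prod_congr rfl hfac, Finset.prod_mul_distrib, hW'def]
    congr 1
    rw [← map_prod, Finset.prod_pow_eq_pow_sum]
  -- the main integral identity
  have hTeq : T = δ * Javg (m + 2) W := by
    apply Polynomial.funext
    intro x
    rw [hT x, eval_mul, ← Javg_eval (m + 2) W hdegW x]
    have hmap : ∀ u : ℝ, (W.map (evalRingHom x)).eval u
        = ∏ ℓ ∈ Finset.Icc 1 (m + 1), (δ.eval x * u + (a i).eval x - (a ℓ).eval x) := by
      intro u
      have h0 : (W.map (evalRingHom x)).eval u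
          = ((evalRingHom u).comp (mapRingHom (evalRingHom x))) W := by
        simp [RingHom.comp_apply, coe_mapRingHom, coe_evalRingHom]
      rw [h0, hWdef, map_prod]
      refine Finset.prod_congr rfl fun ℓ _ => ?_
      simp only [RingHom.comp_apply, coe_mapRingHom, coe_evalRingHom, Polynomial.map_add,
        Polynomial.map_mul, Polynomial.map_C, Polynomial.map_X, eval_add, eval_mul, eval_C,
        eval_X, eval_sub]
      rw [hδdef]
      simp only [eval_sub]
      ring
    have hsub := intervalIntegral.smul_integral_comp_mul_add
      (f := fun t => ∏ ℓ ∈ Finset.Icc 1 (m + 1), (t - (a ℓ).eval x))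
      (a := (0:ℝ)) (b := 1) (δ.eval x) ((a i).eval x)
    have hB : δ.eval x * 1 + (a i).eval x = (a (i + 1)).eval x := by
      simp only [hδdef, eval_sub]; ring
    have hA : δ.eval x * 0 + (a i).eval x = (a i).eval x := by ring
    rw [hB, hA] at hsub
    rw [← hsub]
    rw [smul_eq_mul]
    congr 1
    apply intervalIntegral.integral_congr
    intro u _
    simp only
    exact (hmap u).symm
  have hTfac : T = X ^ (e + ∑ ℓ ∈ Finset.Icc 1 (m + 1), muExp a i ℓ)
      * (d * Javg (m + 2) W') := by
    rw [hTeq, hWfac, Javg_C_mul, hd, pow_add]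
    ring
  refine ⟨d * Javg (m + 2) W', hTfac, ?_⟩
  rw [eval_mul]
  apply mul_ne_zero (ne_of_gt hd0pos)
  rw [← Javg_eval (m + 2) W' hdegW' 0]
  -- signs
  set s : ℕ → ℝ := fun ℓ => if ℓ ≤ i then 1 else -1 with hsdef
  set A : ℕ → ℝ := fun ℓ => (r ℓ).eval 0 with hAdef
  set B : ℕ → ℝ := fun ℓ => ((X : Polynomial ℝ) ^ (e - muExp a i ℓ) * d).eval 0 with hBdef
  have hΦ : ∀ u : ℝ, ((W'.map (evalRingHom 0)).eval u)
      = ∏ ℓ ∈ Finset.Icc 1 (m + 1), (A ℓ + u * B ℓ) := by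
    intro u
    have h0 : (W'.map (evalRingHom 0)).eval u
        = ((evalRingHom u).comp (mapRingHom (evalRingHom 0))) W' := by
      simp [RingHom.comp_apply, coe_mapRingHom, coe_evalRingHom]
    rw [h0, hW'def, map_prod]
    refine Finset.prod_congr rfl fun ℓ _ => ?_
    simp only [hGdef]
    simp only [RingHom.comp_apply, coe_mapRingHom, coe_evalRingHom, Polynomial.map_add,
      Polynomial.map_mul, Polynomial.map_C, Polynomial.map_X, eval_add, eval_mul, eval_C,
      eval_X, hAdef, hBdef]
    ring
  -- eventual sign of each affine factor
  have hsign : ∀ ℓ ∈ Finset.Icc 1 (m + 1), ∀ u : ℝ, 0 < u → u < 1 →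
      0 < s ℓ * (A ℓ + u * B ℓ) := by
    intro ℓ hℓmem u hu hu1
    simp only [Finset.mem_Icc] at hℓmem
    -- rewrite s ℓ * (A + u B) = A' + u * B'
    have hkey : ∀ v : ℝ, (X : Polynomial ℝ) ^ (muExp a i ℓ) *
        (r ℓ + Polynomial.C v * ((X : Polynomial ℝ) ^ (e - muExp a i ℓ) * d))
        = (a i - a ℓ) + Polynomial.C v * δ := by
      intro v
      rw [hd, show (X : Polynomial ℝ) ^ e = X ^ (muExp a i ℓ) * X ^ (e - muExp a i ℓ) from by
        rw [← pow_add]; congr 1; have := hμle ℓ; omega]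
      rw [hr1 ℓ (Finset.mem_Icc.2 hℓmem)]
      ring
    have hAB : ¬(A ℓ = 0 ∧ B ℓ = 0) := by
      rintro ⟨hA0, hB0⟩
      rcases hr2 ℓ (Finset.mem_Icc.2 hℓmem) with hμe | hr0
      · rw [hBdef] at hB0
        simp only [hμe, Nat.sub_self, pow_zero, one_mul] at hB0
        exact hd0 hB0
      · exact hr0 hA0
    have hnonneg : ∀ v : ℝ, 0 < v → v < 1 → 0 ≤ s ℓ * (A ℓ + v * B ℓ) := by
      intro v hv hv1
      have hinner : (A ℓ + v * B ℓ)
          = (r ℓ + Polynomial.C v * ((X : Polynomial ℝ) ^ (e - muExp a i ℓ) * d)).eval 0 := by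
        simp [hAdef, hBdef]
      have hevkey : ∀ x : ℝ, x ^ (muExp a i ℓ) *
          ((r ℓ + Polynomial.C v * ((X : Polynomial ℝ) ^ (e - muExp a i ℓ) * d)).eval x)
          = ((a i).eval x - (a ℓ).eval x) + v * δ.eval x := by
        intro x
        have := congrArg (Polynomial.eval x) (hkey v)
        simpa [eval_mul, eval_pow, eval_add, eval_sub, eval_C] using this
      rcases le_or_gt ℓ i with hci | hci
      · -- positive side
        simp only [hsdef]
        simp only [if_pos hci, one_mul]
        rw [hinner]
        apply eval0_nonneg_of_ev
        have hordev : ∀ᶠ x in 𝓝[>] (0:ℝ), 0 ≤ (a i).eval x - (a ℓ).eval x := by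
          rcases eq_or_lt_of_le hci with rfl | hlt
          · exact Filter.Eventually.of_forall (fun x => by simp)
          · filter_upwards [precPlus_eventually
              (chain_lt m a hchain ℓ i hℓmem.1 hlt (by omega))] with x hx
            linarith
        filter_upwards [hδev, hordev, self_mem_nhdsWithin] with x h1 h2 h3
        have hx : (0:ℝ) < x := h3
        have hk := hevkey x
        nlinarith [pow_pos hx (muExp a i ℓ), mul_pos hv h1]
      · -- negative side
        simp only [hsdef]
        simp only [if_neg (not_le.2 hci)]
        have hgoal : -1 * (A ℓ + v * B ℓ)
            = (-(r ℓ + Polynomial.C v * ((X : Polynomial ℝ) ^ (e - muExp a i ℓ) * d))).eval 0 := by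
          rw [eval_neg, ← hinner]; ring
        rw [hgoal]
        apply eval0_nonneg_of_ev
        have hordev : ∀ᶠ x in 𝓝[>] (0:ℝ), (a (i + 1)).eval x ≤ (a ℓ).eval x := by
          rcases eq_or_lt_of_le (show i + 1 ≤ ℓ from hci) with heq | hlt
          · exact Filter.Eventually.of_forall (fun x => by rw [heq])
          · filter_upwards [precPlus_eventually
              (chain_lt m a hchain (i + 1) ℓ (by omega) hlt hℓmem.2)] with x hx
            linarith
        filter_upwards [hδev, hordev, self_mem_nhdsWithin] with x h1 h2 h3
        have hx : (0:ℝ) < x := h3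
        have hk := hevkey x
        have hδx : δ.eval x = (a (i + 1)).eval x - (a i).eval x := by
          rw [hδdef, eval_sub]
        rw [eval_neg]
        have hRHSneg : ((a i).eval x - (a ℓ).eval x) + v * δ.eval x ≤ 0 := by
          nlinarith [mul_pos (show (0:ℝ) < 1 - v by linarith) h1]
        nlinarith [pow_pos hx (muExp a i ℓ)]
    -- strictness
    have hAB' : ¬(s ℓ * A ℓ = 0 ∧ s ℓ * B ℓ = 0) := by
      rintro ⟨h1, h2⟩
      have hs : s ℓ ≠ 0 := by simp only [hsdef]; split <;> norm_num
      exact hAB ⟨(mul_eq_zero.1 h1).resolve_left hs, (mul_eq_zero.1 h2).resolve_left hs⟩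
    have := affine_pos hAB' (fun v hv hv1 => by
      have := hnonneg v hv hv1
      linarith [this, show s ℓ * (A ℓ + v * B ℓ) = s ℓ * A ℓ + v * (s ℓ * B ℓ) from by ring])
      u hu hu1
    linarith [this, show s ℓ * (A ℓ + u * B ℓ) = s ℓ * A ℓ + u * (s ℓ * B ℓ) from by ring]
  -- conclude via positivity of the integral
  have hprodpos : ∀ u : ℝ, 0 < u → u < 1 →
      0 < (∏ ℓ ∈ Finset.Icc 1 (m + 1), s ℓ) * ((W'.map (evalRingHom 0)).eval u) := by
    intro u hu hu1
    rw [hΦ u, ← Finset.prod_mul_distrib]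
    exact Finset.prod_pos (fun ℓ hℓ => hsign ℓ hℓ u hu hu1)
  have hs2 : (∏ ℓ ∈ Finset.Icc 1 (m + 1), s ℓ) = 1 ∨
      (∏ ℓ ∈ Finset.Icc 1 (m + 1), s ℓ) = -1 := by
    apply mul_self_eq_one_iff.1
    rw [← Finset.prod_mul_distrib]
    apply Finset.prod_eq_one
    intro ℓ _
    simp only [hsdef]
    split <;> norm_num
  have hcont : Continuous fun u : ℝ => (W'.map (evalRingHom 0)).eval u :=
    (W'.map (evalRingHom 0)).continuous
  have hint : 0 < ∫ u in (0:ℝ)..1,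
      (∏ ℓ ∈ Finset.Icc 1 (m + 1), s ℓ) * ((W'.map (evalRingHom 0)).eval u) := by
    apply intervalIntegral_pos_of_pos_on
    · exact (continuous_const.mul hcont).intervalIntegrable 0 1
    · exact fun u hu => hprodpos u hu.1 hu.2
    · norm_num
  rw [intervalIntegral.integral_const_mul] at hint
  intro h0
  rw [h0, mul_zero] at hint
  exact lt_irrefl _ hint

/-- Combinatorial comparison of the two exponents. -/
lemma comb_lt (m : ℕ) (a : ℕ → Polynomial ℝ)
    (hchain : ∀ i, 1 ≤ i → i ≤ m → PrecPlus (a i) (a (i + 1)))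
    (k l : ℕ) (hk1 : 1 ≤ k) (hkm : k ≤ m) (hl1 : 1 ≤ l) (hlm : l ≤ m) (hkl : k ≠ l)
    (hmin : ∀ j, min k l ≤ j → j ≤ max k l → j ≠ k →
      rootMultiplicity 0 (a (k + 1) - a k) < rootMultiplicity 0 (a (j + 1) - a j)) :
    rootMultiplicity 0 (a (k + 1) - a k) + ∑ ℓ ∈ Finset.Icc 1 (m + 1), muExp a k ℓ
      < rootMultiplicity 0 (a (l + 1) - a l) + ∑ ℓ ∈ Finset.Icc 1 (m + 1), muExp a l ℓ := by
  set E : ℕ → ℕ := fun j => rootMultiplicity 0 (a (j + 1) - a j) with hE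
  have hne : ∀ p q, 1 ≤ p → 1 ≤ q → p ≤ m + 1 → q ≤ m + 1 → p ≠ q → a p - a q ≠ 0 := by
    intro p q hp hq hpm hqm hpq
    rcases lt_or_gt_of_ne hpq with h | h
    · have := precPlus_ne (chain_lt m a hchain p q hp h hqm)
      exact fun hc => this (by linear_combination (norm := ring_nf) hc)
    · have := precPlus_ne (chain_lt m a hchain q p hq h hpm)
      exact fun hc => this (by linear_combination (norm := ring_nf) -hc)
  have hEkl : E k < E l := hmin l (min_le_right _ _) (le_max_right _ _) (Ne.symm hkl)
  -- divisibility of a l - a k by X ^ (E k)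
  have hdvdlk : (X : Polynomial ℝ) ^ (E k) ∣ a l - a k := by
    have hstep : ∀ j, min k l ≤ j → j < max k l → (X : Polynomial ℝ) ^ (E k) ∣ a (j + 1) - a j := by
      intro j hj hj'
      rcases eq_or_ne j k with rfl | hjk
      · have := pow_rootMultiplicity_dvd (a (j + 1) - a j) 0
        simpa using this
      · have hlt : E k ≤ E j := le_of_lt (hmin j hj (le_of_lt hj') hjk)
        have := pow_rootMultiplicity_dvd (a (j + 1) - a j) 0
        simp only [C_0, sub_zero] at this
        exact dvd_trans (pow_dvd_pow _ hlt) this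
    rcases lt_or_gt_of_ne hkl with h | h
    · have hmn : min k l = k := min_eq_left (le_of_lt h)
      have hmx : max k l = l := max_eq_right (le_of_lt h)
      rw [hmn, hmx] at hstep
      exact dvd_telescope a (E k) k l (le_of_lt h) hstep
    · have hmn : min k l = l := min_eq_right (le_of_lt h)
      have hmx : max k l = k := max_eq_left (le_of_lt h)
      rw [hmn, hmx] at hstep
      have := dvd_telescope a (E k) l k (le_of_lt h) hstep
      have h2 := (dvd_neg (α := Polynomial ℝ)).2 this
      simpa using h2
  have hdvdkl : (X : Polynomial ℝ) ^ (E k) ∣ a k - a l := by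
    have := (dvd_neg (α := Polynomial ℝ)).2 hdvdlk
    simpa using this
  -- termwise inequality
  have hterm : ∀ ℓ ∈ Finset.Icc 1 (m + 1), muExp a k ℓ ≤ muExp a l ℓ := by
    intro ℓ hℓ
    simp only [Finset.mem_Icc] at hℓ
    apply le_muExp a l ℓ (muExp a k ℓ)
    · intro hℓl
      exact hne l ℓ hl1 hℓ.1 (by omega) hℓ.2 (Ne.symm hℓl)
    · calc muExp a k ℓ ≤ E k := muExp_le a k ℓ
        _ ≤ E l := le_of_lt hEkl
    · have h1 : (X : Polynomial ℝ) ^ (muExp a k ℓ) ∣ a l - a k :=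
        dvd_trans (pow_dvd_pow _ (muExp_le a k ℓ)) hdvdlk
      have h2 := X_pow_muExp_dvd a k ℓ
      have := dvd_add h1 h2
      simpa [sub_add_sub_cancel] using this
  -- strict inequality at a witness
  have hstrict : ∃ ws ∈ Finset.Icc 1 (m + 1), muExp a k ws < muExp a l ws := by
    rcases lt_or_gt_of_ne hkl with h | h
    · refine ⟨l, Finset.mem_Icc.2 ⟨hl1, by omega⟩, ?_⟩
      have h1 : muExp a k l ≤ E k := muExp_le a k l
      have h2 : muExp a l l = E l := by simp [muExp, hE]
      omega
    · refine ⟨l + 1, Finset.mem_Icc.2 ⟨by omega, by omega⟩, ?_⟩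
      have h1 : muExp a k (l + 1) ≤ E k := muExp_le a k (l + 1)
      have h2 : muExp a l (l + 1) = E l := by
        have hrm : rootMultiplicity 0 (a l - a (l + 1)) = E l := by
          rw [show a l - a (l + 1) = -(a (l + 1) - a l) by ring, rm_neg]
        simp [muExp, hrm, hE]
      have h3 : E k < E l := hmin l (min_le_right _ _) (le_max_right _ _) (Ne.symm hkl)
      omega
  obtain ⟨ℓs, hℓs, hℓslt⟩ := hstrict
  have hsum : ∑ ℓ ∈ Finset.Icc 1 (m + 1), muExp a k ℓ < ∑ ℓ ∈ Finset.Icc 1 (m + 1), muExp a l ℓ :=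
    Finset.sum_lt_sum hterm ⟨ℓs, hℓs, hℓslt⟩
  exact Nat.add_lt_add hEkl hsum

theorem stmt_6 (m : ℕ) (hm : 1 ≤ m) (a : ℕ → Polynomial ℝ)
    (hzero : ∀ i, 1 ≤ i → i ≤ m + 1 → (a i).eval 0 = 0)
    (hchain : ∀ i, 1 ≤ i → i ≤ m → PrecPlus (a i) (a (i + 1)))
    (k l : ℕ) (hk1 : 1 ≤ k) (hkm : k ≤ m) (hl1 : 1 ≤ l) (hlm : l ≤ m) (hkl : k ≠ l)
    (hmin : ∀ j, min k l ≤ j → j ≤ max k l → j ≠ k →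
      rootMultiplicity 0 (a (k + 1) - a k) < rootMultiplicity 0 (a (j + 1) - a j))
    (Tk Tl : Polynomial ℝ)
    (hTk : ∀ x : ℝ, Tk.eval x =
      ∫ t in ((a k).eval x)..((a (k + 1)).eval x),
        ∏ ℓ ∈ Finset.Icc 1 (m + 1), (t - (a ℓ).eval x))
    (hTl : ∀ x : ℝ, Tl.eval x =
      ∫ t in ((a l).eval x)..((a (l + 1)).eval x),
        ∏ ℓ ∈ Finset.Icc 1 (m + 1), (t - (a ℓ).eval x)) :
    rootMultiplicity 0 Tk < rootMultiplicity 0 Tl ∧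
      ∃ x₀ > (0 : ℝ), ∀ x : ℝ, 0 < x → x < x₀ → |Tl.eval x| < |Tk.eval x| := by
  obtain ⟨gk, hgk, hgk0⟩ := key_factor m a hchain k hk1 hkm Tk hTk
  obtain ⟨gl, hgl, hgl0⟩ := key_factor m a hchain l hl1 hlm Tl hTl
  set Nk := rootMultiplicity 0 (a (k + 1) - a k) + ∑ ℓ ∈ Finset.Icc 1 (m + 1), muExp a k ℓ
  set Nl := rootMultiplicity 0 (a (l + 1) - a l) + ∑ ℓ ∈ Finset.Icc 1 (m + 1), muExp a l ℓ
  have hNkNl : Nk < Nl := comb_lt m a hchain k l hk1 hkm hl1 hlm hkl hmin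
  have hrmk : rootMultiplicity 0 Tk = Nk := by rw [hgk]; exact rm_X_pow_mul _ _ hgk0
  have hrml : rootMultiplicity 0 Tl = Nl := by rw [hgl]; exact rm_X_pow_mul _ _ hgl0
  refine ⟨by rw [hrmk, hrml]; exact hNkNl, ?_⟩
  -- part 2
  set c : ℝ := |gk.eval 0| / 2 with hc
  have hcpos : 0 < c := by positivity
  set M : ℝ := |gl.eval 0| + 1 with hM
  have hMpos : 0 < M := by positivity
  have hopen1 : ∀ᶠ x in 𝓝 (0:ℝ), c < |gk.eval x| := by
    have hs : IsOpen {x : ℝ | c < |gk.eval x|} := isOpen_lt continuous_const gk.continuous.abs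
    have h0 : (0:ℝ) ∈ {x : ℝ | c < |gk.eval x|} := by
      have := abs_pos.2 hgk0
      simp only [Set.mem_setOf_eq, hc]; linarith
    exact Filter.eventually_iff.2 (hs.mem_nhds h0)
  have hopen2 : ∀ᶠ x in 𝓝 (0:ℝ), |gl.eval x| < M := by
    have hs : IsOpen {x : ℝ | |gl.eval x| < M} := isOpen_lt gl.continuous.abs continuous_const
    have h0 : (0:ℝ) ∈ {x : ℝ | |gl.eval x| < M} := by
      simp only [Set.mem_setOf_eq, hM]; linarith
    exact Filter.eventually_iff.2 (hs.mem_nhds h0)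
  obtain ⟨ε, hεpos, hε⟩ := Metric.eventually_nhds_iff.1 (hopen1.and hopen2)
  refine ⟨min ε (min 1 (c / M)), by positivity, fun x hx hxlt => ?_⟩
  have hxε : x < ε := lt_of_lt_of_le hxlt (min_le_left _ _)
  have hx1 : x < 1 := lt_of_lt_of_le hxlt (le_trans (min_le_right _ _) (min_le_left _ _))
  have hxcM : x < c / M := lt_of_lt_of_le hxlt (le_trans (min_le_right _ _) (min_le_right _ _))
  have hballs := hε (by rw [Real.dist_eq, sub_zero, abs_of_pos hx]; exact hxε)
  have h1 : c < |gk.eval x| := hballs.1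
  have h2 : |gl.eval x| < M := hballs.2
  have hTkx : |Tk.eval x| = x ^ Nk * |gk.eval x| := by
    rw [hgk, eval_mul, abs_mul, eval_pow, eval_X, abs_pow, abs_of_pos hx]
  have hTlx : |Tl.eval x| = x ^ Nl * |gl.eval x| := by
    rw [hgl, eval_mul, abs_mul, eval_pow, eval_X, abs_pow, abs_of_pos hx]
  rw [hTkx, hTlx]
  have hpowle : x ^ Nl ≤ x ^ Nk * x := by
    calc x ^ Nl ≤ x ^ (Nk + 1) :=
          pow_le_pow_of_le_one (le_of_lt hx) (le_of_lt hx1) (by omega)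
      _ = x ^ Nk * x := by ring
  have hxNk : (0:ℝ) < x ^ Nk := pow_pos hx _
  calc x ^ Nl * |gl.eval x| ≤ (x ^ Nk * x) * |gl.eval x| := by
        apply mul_le_mul_of_nonneg_right hpowle (abs_nonneg _)
    _ < (x ^ Nk * (c / M)) * M := by
        have hxM : x * |gl.eval x| < (c / M) * M := by
          have h3 : x * |gl.eval x| ≤ x * M := by
            apply mul_le_mul_of_nonneg_left (le_of_lt h2) (le_of_lt hx)
          have h4 : x * M < (c / M) * M := by
            apply mul_lt_mul_of_pos_right hxcM hMpos
          exact lt_of_le_of_lt h3 h4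
        calc x ^ Nk * x * |gl.eval x| = x ^ Nk * (x * |gl.eval x|) := by ring
          _ < x ^ Nk * ((c / M) * M) := by exact mul_lt_mul_of_pos_left hxM hxNk
          _ = x ^ Nk * (c / M) * M := by ring
    _ = x ^ Nk * c := by field_simp
    _ < x ^ Nk * |gk.eval x| := mul_lt_mul_of_pos_left h1 hxNk
end

section
/- Let m ≥ 1 and let a_1, …, a_{m+1} ∈ ℝ[X] satisfy a_i(0) = 0 for all i and a_1 ≺₊ a_2 ≺₊ ⋯ ≺₊ a_{m+1}. Set e_i := ord(a_{i+1} − a_i) for 1 ≤ i ≤ m, and for 1 ≤ i ≤ m let T_i ∈ ℝ[X] be the unique polynomial with T_i(x) = ∫_{a_i(x)}^{a_{i+1}(x)} ∏_{ℓ=1}^{m+1} (t − a_ℓ(x)) dt for all x ∈ ℝ. Fix 1 ≤ i < j ≤ m+1 and suppose k ∈ {i,…,j−1} satisfies e_k < e_ℓ for all ℓ ∈ {i,…,j−1} with ℓ ≠ k. Then for every choice of signs ε : {i,…,j−1} → {−1, +1}, the polynomial Σ_{ℓ=i}^{j−1} ε(ℓ)·T_ℓ is nonzero and ord( Σ_{ℓ=i}^{j−1}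 ε(ℓ)·T_ℓ ) = ord(T_k). -/
open Polynomial

lemma pow_compare {a b : ℕ} {c C x₀ : ℝ} (hc : 0 < c) (hx₀ : 0 < x₀)
    (h : ∀ x : ℝ, 0 < x → x < x₀ → c * x ^ a ≤ C * x ^ b) : b ≤ a := by
  by_contra hab
  push_neg at hab
  have hC : 0 < C := by
    have h1 := h (x₀/2) (by linarith) (by linarith)
    nlinarith [pow_pos (show (0:ℝ) < x₀/2 by linarith) a, pow_pos (show (0:ℝ) < x₀/2 by linarith) b]
  set x : ℝ := min (x₀/2) (min 1 (c/(2*C))) with hxdef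
  have hx0 : 0 < x := by
    simp only [hxdef, lt_min_iff]
    refine ⟨by linarith, by norm_num, by positivity⟩
  have hx1 : x ≤ 1 := le_trans (min_le_right _ _) (min_le_left _ _)
  have hxc : x ≤ c/(2*C) := le_trans (min_le_right _ _) (min_le_right _ _)
  have hxx₀ : x < x₀ := lt_of_le_of_lt (min_le_left _ _) (by linarith)
  have key := h x hx0 hxx₀
  have hpow : x ^ b ≤ x ^ (a+1) := pow_le_pow_of_le_one hx0.le hx1 hab
  have : c * x ^ a ≤ C * (x ^ a * x) := by
    calc c * x ^ a ≤ C * x ^ b := key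
    _ ≤ C * x ^ (a+1) := by nlinarith
    _ = C * (x ^ a * x) := by ring
  have hxa : 0 < x ^ a := pow_pos hx0 a
  have : c ≤ C * x := by
    have := mul_le_mul_of_nonneg_right this (le_of_lt (inv_pos.mpr hxa))
    calc c = c * x ^ a * (x ^ a)⁻¹ := by field_simp
    _ ≤ C * (x ^ a * x) * (x ^ a)⁻¹ := this
    _ = C * x := by field_simp
  have : C * x ≤ C * (c/(2*C)) := by nlinarith
  have : C * (c/(2*C)) = c/2 := by field_simp
  linarith [hxc]

lemma ord_val_bounds (f : Polynomial ℝ) (hf : f ≠ 0) :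
    ∃ c C x₀ : ℝ, 0 < c ∧ 0 < C ∧ 0 < x₀ ∧ ∀ x : ℝ, 0 < x → x < x₀ →
      c * x ^ (rootMultiplicity 0 f) ≤ |f.eval x| ∧
      |f.eval x| ≤ C * x ^ (rootMultiplicity 0 f) := by
  set n := rootMultiplicity 0 f with hn
  obtain ⟨g, hg, hgnd⟩ := f.exists_eq_pow_rootMultiplicity_mul_and_not_dvd hf 0
  rw [← hn] at hg
  have hg0 : g.eval 0 ≠ 0 := by
    intro h
    exact hgnd (by simpa using (dvd_iff_isRoot).mpr h)
  set G : ℝ := |g.eval 0| with hG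
  have hGpos : 0 < G := abs_pos.mpr hg0
  have hcont : ContinuousAt (fun x : ℝ => g.eval x) 0 :=
    (Polynomial.continuous g).continuousAt
  rw [Metric.continuousAt_iff] at hcont
  obtain ⟨δ, hδ, hδ'⟩ := hcont (G/2) (by linarith)
  refine ⟨G/2, 2*G, δ, by linarith, by linarith, hδ, fun x hx hx' => ?_⟩
  have hd : dist x 0 < δ := by
    simp [Real.dist_eq, abs_of_pos hx]; linarith
  have hgx := hδ' hd
  rw [Real.dist_eq] at hgx
  have h1 : G/2 ≤ |g.eval x| := by
    have := abs_sub_abs_le_abs_sub (g.eval 0) (g.eval x)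
    rw [abs_sub_comm (g.eval 0)] at this
    linarith [this]
  have h2 : |g.eval x| ≤ 2*G := by
    have := abs_sub_abs_le_abs_sub (g.eval x) (g.eval 0)
    linarith
  have hev : |f.eval x| = x ^ n * |g.eval x| := by
    rw [hg]
    simp [abs_mul, abs_pow, abs_of_pos hx]
  constructor
  · rw [hev]; have := pow_pos hx n; nlinarith
  · rw [hev]; have := pow_pos hx n; nlinarith

lemma ord_le_of_lower (f : Polynomial ℝ) (n : ℕ) (c x₀ : ℝ) (hc : 0 < c) (hx₀ : 0 < x₀)
    (h : ∀ x : ℝ, 0 < x → x < x₀ → c * x ^ n ≤ |f.eval x|) :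
    f ≠ 0 ∧ rootMultiplicity 0 f ≤ n := by
  have hf : f ≠ 0 := by
    intro h0
    have := h (x₀/2) (by linarith) (by linarith)
    rw [h0] at this
    simp at this
    nlinarith [pow_pos (show (0:ℝ) < x₀/2 by linarith) n]
  refine ⟨hf, ?_⟩
  obtain ⟨c', C', x₁, hc', hC', hx₁, hb⟩ := ord_val_bounds f hf
  refine pow_compare (C := C') hc (lt_min hx₀ hx₁) (fun x hx hx' => ?_)
  have h1 := h x hx (lt_of_lt_of_le hx' (min_le_left _ _))
  have h2 := (hb x hx (lt_of_lt_of_le hx' (min_le_right _ _))).2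
  linarith

lemma ord_ge_of_upper (f : Polynomial ℝ) (hf : f ≠ 0) (n : ℕ) (C x₀ : ℝ) (hx₀ : 0 < x₀)
    (h : ∀ x : ℝ, 0 < x → x < x₀ → |f.eval x| ≤ C * x ^ n) :
    n ≤ rootMultiplicity 0 f := by
  obtain ⟨c', C', x₁, hc', hC', hx₁, hb⟩ := ord_val_bounds f hf
  refine pow_compare (C := C) hc' (lt_min hx₀ hx₁) (fun x hx hx' => ?_)
  have h1 := h x hx (lt_of_lt_of_le hx' (min_le_left _ _))
  have h2 := (hb x hx (lt_of_lt_of_le hx' (min_le_right _ _))).1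
  linarith

lemma exists_forall_finset {ι : Type*} (s : Finset ι) (P : ι → ℝ → Prop)
    (h : ∀ q ∈ s, ∃ δ : ℝ, 0 < δ ∧ ∀ x : ℝ, 0 < x → x < δ → P q x) :
    ∃ δ : ℝ, 0 < δ ∧ ∀ x : ℝ, 0 < x → x < δ → ∀ q ∈ s, P q x := by
  classical
  induction s using Finset.cons_induction with
  | empty => exact ⟨1, one_pos, by simp⟩
  | cons a s ha ih =>
    obtain ⟨δ₁, hδ₁, h₁⟩ := h a (Finset.mem_cons_self a s)
    obtain ⟨δ₂, hδ₂, h₂⟩ := ih (fun q hq => h q (Finset.mem_cons.mpr (Or.inr hq)))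
    refine ⟨min δ₁ δ₂, lt_min hδ₁ hδ₂, fun x hx hx' q hq => ?_⟩
    rcases Finset.mem_cons.mp hq with rfl | hq
    · exact h₁ x hx (lt_of_lt_of_le hx' (min_le_left _ _))
    · exact h₂ x hx (lt_of_lt_of_le hx' (min_le_right _ _)) q hq

lemma prod_bounds {ι : Type*} (s : Finset ι) (F : ι → ℝ → ℝ) (n : ι → ℕ)
    (h : ∀ q ∈ s, ∃ c C δ : ℝ, 0 < c ∧ 0 < δ ∧ ∀ x : ℝ, 0 < x → x < δ →
      c * x ^ (n q) ≤ F q x ∧ F q x ≤ C * x ^ (n q)) :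
    ∃ c C δ : ℝ, 0 < c ∧ 0 < δ ∧ ∀ x : ℝ, 0 < x → x < δ →
      c * x ^ (∑ q ∈ s, n q) ≤ ∏ q ∈ s, F q x ∧ (∏ q ∈ s, F q x) ≤ C * x ^ (∑ q ∈ s, n q) := by
  classical
  induction s using Finset.cons_induction with
  | empty => exact ⟨1, 1, 1, one_pos, one_pos, by simp⟩
  | cons a s ha ih =>
    obtain ⟨c₁, C₁, δ₁, hc₁, hδ₁, h₁⟩ := h a (Finset.mem_cons_self a s)
    obtain ⟨c₂, C₂, δ₂, hc₂, hδ₂, h₂⟩ := ih (fun q hq => h q (Finset.mem_cons.mpr (Or.inr hq)))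
    refine ⟨c₁ * c₂, C₁ * C₂, min δ₁ δ₂, by positivity, lt_min hδ₁ hδ₂, fun x hx hx' => ?_⟩
    obtain ⟨l₁, u₁⟩ := h₁ x hx (lt_of_lt_of_le hx' (min_le_left _ _))
    obtain ⟨l₂, u₂⟩ := h₂ x hx (lt_of_lt_of_le hx' (min_le_right _ _))
    rw [Finset.prod_cons, Finset.sum_cons, pow_add]
    have p1 : 0 < x ^ n a := pow_pos hx _
    have p2 : 0 < x ^ (∑ q ∈ s, n q) := pow_pos hx _
    have hFa : 0 < F a x := lt_of_lt_of_le (by positivity) l₁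
    have hFs : 0 < ∏ q ∈ s, F q x := lt_of_lt_of_le (by positivity) l₂
    constructor
    · calc c₁ * c₂ * (x ^ n a * x ^ (∑ q ∈ s, n q))
          = (c₁ * x ^ n a) * (c₂ * x ^ (∑ q ∈ s, n q)) := by ring
        _ ≤ F a x * ∏ q ∈ s, F q x := by
            apply mul_le_mul l₁ l₂ (by positivity) hFa.le
    · calc F a x * ∏ q ∈ s, F q x
          ≤ (C₁ * x ^ n a) * (C₂ * x ^ (∑ q ∈ s, n q)) := by
            apply mul_le_mul u₁ u₂ hFs.le (le_trans hFa.le u₁)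
        _ = C₁ * C₂ * (x ^ n a * x ^ (∑ q ∈ s, n q)) := by ring

lemma rm_min_le_add (f g : ℝ[X]) (hfg : f + g ≠ 0) :
    min (rootMultiplicity 0 f) (rootMultiplicity 0 g) ≤ rootMultiplicity 0 (f + g) := by
  rw [le_rootMultiplicity_iff hfg]
  apply dvd_add
  · exact dvd_trans (pow_dvd_pow _ (min_le_left _ _)) (pow_rootMultiplicity_dvd f 0)
  · exact dvd_trans (pow_dvd_pow _ (min_le_right _ _)) (pow_rootMultiplicity_dvd g 0)

lemma rm_add_eq (f g : ℝ[X]) (hf : f ≠ 0)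
    (hdvd : (X - C (0:ℝ)) ^ (rootMultiplicity 0 f + 1) ∣ g) :
    f + g ≠ 0 ∧ rootMultiplicity 0 (f + g) = rootMultiplicity 0 f := by
  set n := rootMultiplicity 0 f with hn
  have hnd : ¬ (X - C (0:ℝ)) ^ (n + 1) ∣ f := by
    rw [hn, ← rootMultiplicity_le_iff hf]
  have hsum : ¬ (X - C (0:ℝ)) ^ (n + 1) ∣ (f + g) := by
    intro hd
    exact hnd (by simpa using dvd_sub hd hdvd)
  have hne : f + g ≠ 0 := by
    intro h0
    rw [h0] at hsum
    exact hsum (dvd_zero _)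
  refine ⟨hne, le_antisymm ?_ ?_⟩
  · rw [← Nat.lt_add_one_iff, ← not_le, le_rootMultiplicity_iff hne]
    exact hsum
  · rw [le_rootMultiplicity_iff hne]
    exact dvd_add (pow_rootMultiplicity_dvd f 0)
      (dvd_trans (pow_dvd_pow _ (Nat.le_succ n)) hdvd)

lemma chain_pos (m : ℕ) (a : ℕ → Polynomial ℝ)
    (hchain : ∀ i, 1 ≤ i → i ≤ m → PrecPlus (a i) (a (i + 1))) :
    ∃ δ : ℝ, 0 < δ ∧ ∀ x : ℝ, 0 < x → x < δ →
      ∀ p q, 1 ≤ p → p < q → q ≤ m + 1 → (a p).eval x < (a q).eval x := by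
  obtain ⟨δ, hδ, H⟩ := exists_forall_finset (Finset.Icc 1 m)
    (fun r x => (a r).eval x < (a (r+1)).eval x)
    (fun r hr => by
      obtain ⟨hr1, hr2⟩ := Finset.mem_Icc.mp hr
      obtain ⟨x₀, hx₀, hP⟩ := hchain r hr1 hr2
      exact ⟨x₀, hx₀, hP⟩)
  refine ⟨δ, hδ, fun x hx hx' p q hp hpq hq => ?_⟩
  induction q with
  | zero => omega
  | succ q ih =>
    have hstep : ∀ r, 1 ≤ r → r ≤ m → (a r).eval x < (a (r+1)).eval x :=
      fun r h1 h2 => H x hx hx' r (Finset.mem_Icc.mpr ⟨h1, h2⟩)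
    rcases Nat.lt_or_ge p q with hlt | hge
    · exact lt_trans (ih (by omega) (by omega)) (hstep q (by omega) (by omega))
    · have : p = q := by omega
      subst this
      exact hstep p hp (by omega)

set_option maxHeartbeats 1000000 in
theorem stmt_7 (m : ℕ) (hm : 1 ≤ m) (a : ℕ → Polynomial ℝ)
    (hzero : ∀ i, 1 ≤ i → i ≤ m + 1 → (a i).eval 0 = 0)
    (hchain : ∀ i, 1 ≤ i → i ≤ m → PrecPlus (a i) (a (i + 1)))
    (T : ℕ → Polynomial ℝ)
    (hT : ∀ ℓ, 1 ≤ ℓ → ℓ ≤ m → ∀ x : ℝ, (T ℓ).eval x =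
      ∫ t in ((a ℓ).eval x)..((a (ℓ + 1)).eval x),
        ∏ q ∈ Finset.Icc 1 (m + 1), (t - (a q).eval x))
    (i j k : ℕ) (hi : 1 ≤ i) (hij : i < j) (hj : j ≤ m + 1)
    (hik : i ≤ k) (hkj : k < j)
    (hmin : ∀ ℓ, i ≤ ℓ → ℓ < j → ℓ ≠ k →
      rootMultiplicity 0 (a (k + 1) - a k) < rootMultiplicity 0 (a (ℓ + 1) - a ℓ)) :
    ∀ ε : ℕ → ℝ, (∀ ℓ, ε ℓ = 1 ∨ ε ℓ = -1) →
      (∑ ℓ ∈ Finset.Ico i j, Polynomial.C (ε ℓ) * T ℓ) ≠ 0 ∧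
        rootMultiplicity 0 (∑ ℓ ∈ Finset.Ico i j, Polynomial.C (ε ℓ) * T ℓ) =
          rootMultiplicity 0 (T k) := by
  intro ε hε
  obtain ⟨δ₀, hδ₀, hord⟩ := chain_pos m a hchain
  have hk1 : 1 ≤ k := le_trans hi hik
  have hkm : k ≤ m := by omega
  -- positivity and nonvanishing of differences
  have hDpos : ∀ p q : ℕ, 1 ≤ p → p < q → q ≤ m + 1 →
      ∀ x : ℝ, 0 < x → x < δ₀ → 0 < (a q - a p).eval x := by
    intro p q hp hpq hq x hx hx'
    simp only [eval_sub, sub_pos]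
    exact hord x hx hx' p q hp hpq hq
  have hDne : ∀ p q : ℕ, 1 ≤ p → p < q → q ≤ m + 1 → a q - a p ≠ 0 := by
    intro p q hp hpq hq h0
    have := hDpos p q hp hpq hq (δ₀/2) (by linarith) (by linarith)
    rw [h0] at this
    simp at this
  set O : ℕ → ℕ → ℕ := fun p q => rootMultiplicity 0 (a q - a p) with hOdef
  set E : ℕ → ℕ := fun r => O r (r+1) with hEdef
  -- two-sided value bounds for the (positive) differences
  have hDval : ∀ p q : ℕ, 1 ≤ p → p < q → q ≤ m + 1 → ∃ c C δ : ℝ, 0 < c ∧ 0 < δ ∧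
      ∀ x : ℝ, 0 < x → x < δ → c * x ^ (O p q) ≤ (a q - a p).eval x ∧
        (a q - a p).eval x ≤ C * x ^ (O p q) := by
    intro p q hp hpq hq
    obtain ⟨c, C, x₀, hc, hC, hx₀, hb⟩ := ord_val_bounds _ (hDne p q hp hpq hq)
    refine ⟨c, C, min x₀ δ₀, hc, lt_min hx₀ hδ₀, fun x hx hx' => ?_⟩
    have h1 := hb x hx (lt_of_lt_of_le hx' (min_le_left _ _))
    have h2 := hDpos p q hp hpq hq x hx (lt_of_lt_of_le hx' (min_le_right _ _))
    rw [abs_of_pos h2] at h1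
    exact h1
  -- drop lemma : enlarging the interval decreases the order
  have hdrop : ∀ p q r : ℕ, 1 ≤ p → p < q → q < r → r ≤ m + 1 →
      O p r ≤ O p q ∧ O p r ≤ O q r := by
    intro p q r hp hpq hqr hr
    constructor
    · obtain ⟨c, C, δ, hc, hδ, hb⟩ := hDval p q hp hpq (by omega)
      refine (ord_le_of_lower (a r - a p) (O p q) c (min δ δ₀) hc (lt_min hδ hδ₀)
        (fun x hx hx' => ?_)).2
      have h1 := (hb x hx (lt_of_lt_of_le hx' (min_le_left _ _))).1
      have h2 := hDpos q r (by omega) hqr hr x hx (lt_of_lt_of_le hx' (min_le_right _ _))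
      have h3 := hDpos p r hp (by omega) hr x hx (lt_of_lt_of_le hx' (min_le_right _ _))
      rw [abs_of_pos h3]
      simp only [eval_sub] at h1 h2 ⊢
      linarith
    · obtain ⟨c, C, δ, hc, hδ, hb⟩ := hDval q r (by omega) hqr hr
      refine (ord_le_of_lower (a r - a p) (O q r) c (min δ δ₀) hc (lt_min hδ hδ₀)
        (fun x hx hx' => ?_)).2
      have h1 := (hb x hx (lt_of_lt_of_le hx' (min_le_left _ _))).1
      have h2 := hDpos p q hp hpq (by omega) x hx (lt_of_lt_of_le hx' (min_le_right _ _))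
      have h3 := hDpos p r hp (by omega) hr x hx (lt_of_lt_of_le hx' (min_le_right _ _))
      rw [abs_of_pos h3]
      simp only [eval_sub] at h1 h2 ⊢
      linarith
  -- ultrametric inequality
  have hminO : ∀ p q r : ℕ, 1 ≤ p → p < q → q < r → r ≤ m + 1 →
      min (O p q) (O q r) ≤ O p r := by
    intro p q r hp hpq hqr hr
    have hsplit : a r - a p = (a q - a p) + (a r - a q) := by ring
    rw [hOdef]
    simp only
    rw [hsplit]
    exact rm_min_le_add _ _ (by rw [← hsplit]; exact hDne p r hp (by omega) hr)
  -- order is at most any edge inside the interval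
  have hedge : ∀ p r q : ℕ, 1 ≤ p → p ≤ r → r < q → q ≤ m + 1 → O p q ≤ E r := by
    intro p r q hp hpr hrq hq
    have h1 : O p q ≤ O r q := by
      rcases Nat.eq_or_lt_of_le hpr with rfl | hlt
      · exact le_refl _
      · exact (hdrop p r q hp hlt hrq hq).2
    have h2 : O r q ≤ O r (r+1) := by
      rcases Nat.eq_or_lt_of_le (show r + 1 ≤ q by omega) with heq | hlt
      · rw [heq]
      · exact (hdrop r (r+1) q (by omega) (by omega) hlt hq).1
    exact le_trans h1 h2
  -- order is more than c if all edges are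
  have hgt : ∀ (c : ℕ) (p q : ℕ), 1 ≤ p → p < q → q ≤ m + 1 →
      (∀ r, p ≤ r → r < q → c < E r) → c < O p q := by
    intro c p q hp hpq hq hall
    induction q with
    | zero => omega
    | succ q ih =>
      rcases Nat.lt_or_ge p q with hlt | hge
      · have h1 : c < O p q := ih hlt (by omega) (fun r hr hr' => hall r hr (by omega))
        have h2 : c < E q := hall q (by omega) (by omega)
        have h3 := hminO p q (q+1) hp hlt (by omega) hq
        have h4 : min (O p q) (O q (q+1)) = min (O p q) (E q) := rfl
        omega
      · have : p = q := by omega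
        subst this
        exact hall p (le_refl _) (by omega)
  -- the bounding polynomials and their orders
  set b : ℕ → ℕ → ℕ := fun ℓ q => if q ≤ ℓ then O q (ℓ+1) else O ℓ q with hbdef
  set N : ℕ → ℕ := fun ℓ => E ℓ + ∑ q ∈ Finset.Icc 1 (m+1), b ℓ q with hNdef
  have hEk_lt : ∀ ℓ, i ≤ ℓ → ℓ < j → ℓ ≠ k → E k < E ℓ := by
    intro ℓ h1 h2 h3
    exact hmin ℓ h1 h2 h3
  -- termwise comparison of the orders of the bounding polynomials
  have hble : ∀ ℓ, i ≤ ℓ → ℓ < j → ℓ ≠ k → ∀ q, 1 ≤ q → q ≤ m + 1 → b k q ≤ b ℓ q := by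
    intro ℓ hiℓ hℓj hℓk q hq1 hq2
    have hℓ1 : 1 ≤ ℓ := le_trans hi hiℓ
    have hℓm : ℓ ≤ m := by omega
    rcases Nat.lt_or_ge k ℓ with hkℓ | hℓk'
    · -- k < ℓ
      rcases le_or_gt q k with h1 | h1
      · -- q ≤ k < ℓ : both first branch
        have e1 : b k q = O q (k+1) := if_pos h1
        have e2 : b ℓ q = O q (ℓ+1) := if_pos (le_trans h1 (le_of_lt hkℓ))
        rw [e1, e2]
        have hA : O q (k+1) ≤ E k := hedge q k (k+1) hq1 h1 (by omega) (by omega)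
        have hB : E k < O (k+1) (ℓ+1) := hgt (E k) (k+1) (ℓ+1) (by omega) (by omega)
          (by omega) (fun r hr hr' => hEk_lt r (by omega) (by omega) (by omega))
        have hC := hminO q (k+1) (ℓ+1) hq1 (by omega) (by omega) (by omega)
        have hD : min (O q (k+1)) (O (k+1) (ℓ+1)) = O q (k+1) := min_eq_left (by omega)
        omega
      · rcases le_or_gt q ℓ with h2 | h2
        · -- k < q ≤ ℓ
          have e1 : b k q = O k q := if_neg (by omega)
          have e2 : b ℓ q = O q (ℓ+1) := if_pos h2
          rw [e1, e2]
          have hA : O k q ≤ E k := hedge k k q hk1 (le_refl _) h1 hq2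
          have hB : E k < O q (ℓ+1) := hgt (E k) q (ℓ+1) hq1 (by omega) (by omega)
            (fun r hr hr' => hEk_lt r (by omega) (by omega) (by omega))
          omega
        · -- k < ℓ < q
          have e1 : b k q = O k q := if_neg (by omega)
          have e2 : b ℓ q = O ℓ q := if_neg (by omega)
          rw [e1, e2]
          exact (hdrop k ℓ q hk1 hkℓ h2 hq2).2
    · -- ℓ < k (since ℓ ≠ k)
      have hℓk2 : ℓ < k := by omega
      rcases le_or_gt q ℓ with h1 | h1
      · -- q ≤ ℓ < k
        have e1 : b k q = O q (k+1) := if_pos (by omega)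
        have e2 : b ℓ q = O q (ℓ+1) := if_pos h1
        rw [e1, e2]
        exact (hdrop q (ℓ+1) (k+1) hq1 (by omega) (by omega) (by omega)).1
      · rcases le_or_gt q k with h2 | h2
        · -- ℓ < q ≤ k
          have e1 : b k q = O q (k+1) := if_pos h2
          have e2 : b ℓ q = O ℓ q := if_neg (by omega)
          rw [e1, e2]
          have hA : O q (k+1) ≤ E k := hedge q k (k+1) hq1 h2 (by omega) (by omega)
          have hB : E k < O ℓ q := hgt (E k) ℓ q hℓ1 h1 hq2
            (fun r hr hr' => hEk_lt r (by omega) (by omega) (by omega))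
          omega
        · -- ℓ < k < q
          have e1 : b k q = O k q := if_neg (by omega)
          have e2 : b ℓ q = O ℓ q := if_neg (by omega)
          rw [e1, e2]
          have hA : O k q ≤ E k := hedge k k q hk1 (le_refl _) h2 hq2
          have hB : E k < O ℓ k := hgt (E k) ℓ k hℓ1 hℓk2 (by omega)
            (fun r hr hr' => hEk_lt r (by omega) (by omega) (by omega))
          have hC := hminO ℓ k q hℓ1 hℓk2 h2 hq2
          have hD : min (O ℓ k) (O k q) = O k q := min_eq_right (by omega)
          omega
  have hNlt : ∀ ℓ, i ≤ ℓ → ℓ < j → ℓ ≠ k → N k + 1 ≤ N ℓ := by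
    intro ℓ h1 h2 h3
    have hE := hEk_lt ℓ h1 h2 h3
    have hsum : ∑ q ∈ Finset.Icc 1 (m+1), b k q ≤ ∑ q ∈ Finset.Icc 1 (m+1), b ℓ q := by
      apply Finset.sum_le_sum
      intro q hq
      obtain ⟨hq1, hq2⟩ := Finset.mem_Icc.mp hq
      exact hble ℓ h1 h2 h3 q hq1 hq2
    simp only [hNdef]
    omega
  -- upper bound on |T ℓ|
  have hTup : ∀ ℓ, 1 ≤ ℓ → ℓ ≤ m → ∃ C δ : ℝ, 0 < δ ∧ ∀ x : ℝ, 0 < x → x < δ →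
      |(T ℓ).eval x| ≤ C * x ^ (N ℓ) := by
    intro ℓ hℓ1 hℓm
    obtain ⟨c₁, C₁, δ₁, hc₁, hδ₁, hP⟩ := prod_bounds (Finset.Icc 1 (m+1))
      (fun q x => (if q ≤ ℓ then a (ℓ+1) - a q else a q - a ℓ).eval x) (fun q => b ℓ q)
      (by
        intro q hq
        obtain ⟨hq1, hq2⟩ := Finset.mem_Icc.mp hq
        by_cases h : q ≤ ℓ
        · obtain ⟨c, C, δ, hc, hδ, hb⟩ := hDval q (ℓ+1) hq1 (by omega) (by omega)
          refine ⟨c, C, δ, hc, hδ, fun x hx hx' => ?_⟩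
          have hbq : b ℓ q = O q (ℓ+1) := if_pos h
          simp only [if_pos h, hbq]
          exact hb x hx hx'
        · obtain ⟨c, C, δ, hc, hδ, hb⟩ := hDval ℓ q hℓ1 (by omega) hq2
          refine ⟨c, C, δ, hc, hδ, fun x hx hx' => ?_⟩
          have hbq : b ℓ q = O ℓ q := if_neg h
          simp only [if_neg h, hbq]
          exact hb x hx hx')
    obtain ⟨c₂, C₂, δ₂, hc₂, hδ₂, hdb⟩ := hDval ℓ (ℓ+1) hℓ1 (by omega) (by omega)
    refine ⟨C₁ * C₂, min δ₁ (min δ₂ δ₀), lt_min hδ₁ (lt_min hδ₂ hδ₀), fun x hx hx' => ?_⟩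
    have hx₁ : x < δ₁ := lt_of_lt_of_le hx' (min_le_left _ _)
    have hx₂ : x < δ₂ := lt_of_lt_of_le hx' (le_trans (min_le_right _ _) (min_le_left _ _))
    have hx₀' : x < δ₀ := lt_of_lt_of_le hx' (le_trans (min_le_right _ _) (min_le_right _ _))
    set A := (a ℓ).eval x with hA
    set B' := (a (ℓ+1)).eval x with hB'
    have hAB : A < B' := hord x hx hx₀' ℓ (ℓ+1) hℓ1 (by omega) (by omega)
    have hbound : ∀ t ∈ Set.uIoc A B', ‖∏ q ∈ Finset.Icc 1 (m+1), (t - (a q).eval x)‖ ≤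
        ∏ q ∈ Finset.Icc 1 (m+1), (if q ≤ ℓ then a (ℓ+1) - a q else a q - a ℓ).eval x := by
      intro t ht
      rw [Set.uIoc_of_le hAB.le] at ht
      obtain ⟨htA, htB⟩ := ht
      rw [Real.norm_eq_abs, Finset.abs_prod]
      apply Finset.prod_le_prod (fun q _ => abs_nonneg _)
      intro q hq
      obtain ⟨hq1, hq2⟩ := Finset.mem_Icc.mp hq
      by_cases h : q ≤ ℓ
      · rw [if_pos h, eval_sub]
        have haq : (a q).eval x ≤ A := by
          rcases eq_or_lt_of_le h with h' | h'
          · rw [h']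
          · exact (hord x hx hx₀' q ℓ hq1 h' (by omega)).le
        rw [abs_of_pos (by linarith)]
        linarith
      · rw [if_neg h, eval_sub]
        have haq : B' ≤ (a q).eval x := by
          rcases eq_or_lt_of_le (show ℓ + 1 ≤ q by omega) with h' | h'
          · rw [← h']
          · exact (hord x hx hx₀' (ℓ+1) q (by omega) h' hq2).le
        rw [abs_of_nonpos (by linarith)]
        linarith
    have hint := intervalIntegral.norm_integral_le_of_norm_le_const hbound
    rw [hT ℓ hℓ1 hℓm x] at *
    obtain ⟨hPl, hPu⟩ := hP x hx hx₁
    obtain ⟨hdl, hdu⟩ := hdb x hx hx₂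
    have hPnn : (0:ℝ) ≤ ∏ q ∈ Finset.Icc 1 (m+1),
        (if q ≤ ℓ then a (ℓ+1) - a q else a q - a ℓ).eval x :=
      le_trans (by positivity) hPl
    have habs : |B' - A| = (a (ℓ+1) - a ℓ).eval x := by
      rw [eval_sub, abs_of_pos (by rw [hA, hB'] at hAB ⊢; linarith)]
    rw [Real.norm_eq_abs, habs] at hint
    have hEb : (a (ℓ+1) - a ℓ).eval x ≤ C₂ * x ^ (E ℓ) := hdu
    have hEnn : (0:ℝ) ≤ (a (ℓ+1) - a ℓ).eval x := le_trans (by positivity) hdl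
    calc |∫ t in A..B', ∏ q ∈ Finset.Icc 1 (m + 1), (t - (a q).eval x)|
        ≤ (∏ q ∈ Finset.Icc 1 (m+1),
            (if q ≤ ℓ then a (ℓ+1) - a q else a q - a ℓ).eval x) * (a (ℓ+1) - a ℓ).eval x := hint
      _ ≤ (C₁ * x ^ (∑ q ∈ Finset.Icc 1 (m+1), b ℓ q)) * (C₂ * x ^ (E ℓ)) := by
          apply mul_le_mul hPu hEb hEnn (le_trans hPnn hPu)
      _ = C₁ * C₂ * x ^ (N ℓ) := by
          have : N ℓ = E ℓ + ∑ q ∈ Finset.Icc 1 (m+1), b ℓ q := rfl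
          rw [this, pow_add]
          ring
  -- lower bound on |T k|
  have hTlow : ∃ c δ : ℝ, 0 < c ∧ 0 < δ ∧ ∀ x : ℝ, 0 < x → x < δ →
      c * x ^ (N k) ≤ |(T k).eval x| := by
    obtain ⟨c₁, C₁, δ₁, hc₁, hδ₁, hP⟩ := prod_bounds (Finset.Icc 1 (m+1))
      (fun q x => (if q ≤ k then a (k+1) - a q else a q - a k).eval x) (fun q => b k q)
      (by
        intro q hq
        obtain ⟨hq1, hq2⟩ := Finset.mem_Icc.mp hq
        by_cases h : q ≤ k
        · obtain ⟨c, C, δ, hc, hδ, hb⟩ := hDval q (k+1) hq1 (by omega) (by omega)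
          refine ⟨c, C, δ, hc, hδ, fun x hx hx' => ?_⟩
          have hbq : b k q = O q (k+1) := if_pos h
          simp only [if_pos h, hbq]
          exact hb x hx hx'
        · obtain ⟨c, C, δ, hc, hδ, hb⟩ := hDval k q hk1 (by omega) hq2
          refine ⟨c, C, δ, hc, hδ, fun x hx hx' => ?_⟩
          have hbq : b k q = O k q := if_neg h
          simp only [if_neg h, hbq]
          exact hb x hx hx')
    obtain ⟨c₂, C₂, δ₂, hc₂, hδ₂, hdb⟩ := hDval k (k+1) hk1 (by omega) (by omega)
    refine ⟨(1/3)^(m+1) * c₁ * (c₂/3), min δ₁ (min δ₂ δ₀), by positivity,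
      lt_min hδ₁ (lt_min hδ₂ hδ₀), fun x hx hx' => ?_⟩
    have hx₁ : x < δ₁ := lt_of_lt_of_le hx' (min_le_left _ _)
    have hx₂ : x < δ₂ := lt_of_lt_of_le hx' (le_trans (min_le_right _ _) (min_le_left _ _))
    have hx₀' : x < δ₀ := lt_of_lt_of_le hx' (le_trans (min_le_right _ _) (min_le_right _ _))
    set A := (a k).eval x with hA
    set Bv := (a (k+1)).eval x with hBv
    have hABlt : A < Bv := hord x hx hx₀' k (k+1) hk1 (by omega) (by omega)
    set d := Bv - A with hd
    have hdpos : 0 < d := by rw [hd]; linarith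
    have hordered : ∀ q, 1 ≤ q → q ≤ m+1 →
        (q ≤ k → (a q).eval x ≤ A) ∧ (k < q → Bv ≤ (a q).eval x) := by
      intro q hq1 hq2
      constructor
      · intro hqk
        rcases eq_or_lt_of_le hqk with h' | h'
        · rw [h']
        · exact (hord x hx hx₀' q k hq1 h' (by omega)).le
      · intro hqk
        rcases eq_or_lt_of_le (show k + 1 ≤ q by omega) with h' | h'
        · rw [← h']
        · exact (hord x hx hx₀' (k+1) q (by omega) h' hq2).le
    set P := ∏ q ∈ Finset.Icc 1 (m+1), (if q ≤ k then a (k+1) - a q else a q - a k).eval x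
      with hPdef
    obtain ⟨hPl, hPu⟩ := hP x hx hx₁
    have hPnn : 0 ≤ P := le_trans (by positivity) hPl
    obtain ⟨hdl, hdu⟩ := hdb x hx hx₂
    have hdeq : (a (k+1) - a k).eval x = d := by rw [eval_sub, hd, hA, hBv]
    set g : ℝ → ℝ := fun t => ∏ q ∈ Finset.Icc 1 (m+1), (t - (a q).eval x) with hgdef
    set h : ℝ → ℝ := fun t => ∏ q ∈ Finset.Icc 1 (m+1),
      (if q ≤ k then t - (a q).eval x else (a q).eval x - t) with hhdef
    set σ : ℝ := ∏ q ∈ Finset.Icc 1 (m+1), (if q ≤ k then (1:ℝ) else -1) with hσdef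
    have hσg : ∀ t, h t = σ * g t := by
      intro t
      rw [hhdef, hσdef, hgdef]
      simp only
      rw [← Finset.prod_mul_distrib]
      apply Finset.prod_congr rfl
      intro q _
      by_cases hq : q ≤ k
      · simp [hq]
      · simp [hq]
    have hσabs : |σ| = 1 := by
      rw [hσdef, Finset.abs_prod]
      apply Finset.prod_eq_one
      intro q _
      by_cases hq : q ≤ k <;> simp [hq]
    have hconth : Continuous h := by
      apply continuous_finset_prod
      intro q _
      by_cases hq : q ≤ k
      · simp only [if_pos hq]; exact continuous_id.sub continuous_const
      · simp only [if_neg hq]; exact continuous_const.sub continuous_id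
    have hh_nn : ∀ t ∈ Set.Icc A Bv, 0 ≤ h t := by
      intro t ht
      obtain ⟨ht1, ht2⟩ := ht
      apply Finset.prod_nonneg
      intro q hq
      obtain ⟨hq1, hq2⟩ := Finset.mem_Icc.mp hq
      by_cases hqk : q ≤ k
      · rw [if_pos hqk]
        have := (hordered q hq1 hq2).1 hqk
        linarith
      · rw [if_neg hqk]
        have := (hordered q hq1 hq2).2 (by omega)
        linarith
    have hh_lb : ∀ t ∈ Set.Icc (A + d/3) (A + 2*d/3), (1/3)^(m+1) * P ≤ h t := by
      intro t ht
      obtain ⟨ht1, ht2⟩ := ht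
      have key : ∏ q ∈ Finset.Icc 1 (m+1),
          ((1:ℝ)/3 * (if q ≤ k then a (k+1) - a q else a q - a k).eval x) ≤ h t := by
        apply Finset.prod_le_prod
        · intro q hq
          obtain ⟨hq1, hq2⟩ := Finset.mem_Icc.mp hq
          by_cases hqk : q ≤ k
          · rw [if_pos hqk, eval_sub]
            have := (hordered q hq1 hq2).1 hqk
            rw [← hBv]
            nlinarith
          · rw [if_neg hqk, eval_sub]
            have := (hordered q hq1 hq2).2 (by omega)
            rw [← hA]
            nlinarith
        · intro q hq
          obtain ⟨hq1, hq2⟩ := Finset.mem_Icc.mp hq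
          by_cases hqk : q ≤ k
          · rw [if_pos hqk, if_pos hqk, eval_sub, ← hBv]
            have := (hordered q hq1 hq2).1 hqk
            linarith
          · rw [if_neg hqk, if_neg hqk, eval_sub, ← hA]
            have := (hordered q hq1 hq2).2 (by omega)
            linarith
      have hprod : ∏ q ∈ Finset.Icc 1 (m+1),
          ((1:ℝ)/3 * (if q ≤ k then a (k+1) - a q else a q - a k).eval x)
          = (1/3)^(m+1) * P := by
        rw [Finset.prod_mul_distrib, Finset.prod_const, hPdef]
        congr 1
        rw [Nat.card_Icc]
        norm_num
      rw [hprod] at key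
      exact key
    have hTkx : (T k).eval x = ∫ t in A..Bv, g t := hT k hk1 hkm x
    have hσT : σ * (T k).eval x = ∫ t in A..Bv, h t := by
      rw [hTkx, ← intervalIntegral.integral_const_mul]
      apply intervalIntegral.integral_congr
      intro t _
      exact (hσg t).symm
    have hint1 : (∫ t in (A + d/3)..(A + 2*d/3), h t) ≤ ∫ t in A..Bv, h t := by
      apply intervalIntegral.integral_mono_interval (by linarith) (by linarith) (by linarith)
      · filter_upwards [MeasureTheory.ae_restrict_mem measurableSet_Ioc] with t ht
        exact hh_nn t ⟨le_of_lt ht.1, ht.2⟩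
      · exact hconth.intervalIntegrable _ _
    have hint2 : ((1/3)^(m+1) * P) * (d/3) ≤ ∫ t in (A + d/3)..(A + 2*d/3), h t := by
      have hmono := intervalIntegral.integral_mono_on (μ := MeasureTheory.volume) (f := fun _ => (1/3:ℝ)^(m+1) * P)
        (g := h) (by linarith : A + d/3 ≤ A + 2*d/3)
        intervalIntegrable_const (hconth.intervalIntegrable _ _) hh_lb
      rw [intervalIntegral.integral_const] at hmono
      have : (A + 2*d/3 - (A + d/3)) = d/3 := by ring
      rw [this] at hmono
      rw [smul_eq_mul] at hmono
      linarith
    have habs : σ * (T k).eval x ≤ |(T k).eval x| := by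
      calc σ * (T k).eval x ≤ |σ * (T k).eval x| := le_abs_self _
        _ = |σ| * |(T k).eval x| := abs_mul _ _
        _ = |(T k).eval x| := by rw [hσabs, one_mul]
    have hxE : 0 < x ^ (E k) := pow_pos hx _
    have hxS : 0 < x ^ (∑ q ∈ Finset.Icc 1 (m+1), b k q) := pow_pos hx _
    have hdl' : c₂ * x ^ (E k) ≤ d := by rw [← hdeq]; exact hdl
    have hNk : N k = E k + ∑ q ∈ Finset.Icc 1 (m+1), b k q := rfl
    calc (1/3)^(m+1) * c₁ * (c₂/3) * x ^ (N k)
        = ((1/3)^(m+1) * (c₁ * x ^ (∑ q ∈ Finset.Icc 1 (m+1), b k q))) *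
            ((c₂ * x ^ (E k))/3) := by
          rw [hNk, pow_add]; ring
      _ ≤ ((1/3)^(m+1) * P) * (d/3) := by
          have h1 : (1/3:ℝ)^(m+1) * (c₁ * x ^ (∑ q ∈ Finset.Icc 1 (m+1), b k q))
              ≤ (1/3)^(m+1) * P := by
            apply mul_le_mul_of_nonneg_left hPl (by positivity)
          have h2 : (c₂ * x ^ (E k))/3 ≤ d/3 := by linarith
          apply mul_le_mul h1 h2 (div_nonneg (mul_nonneg hc₂.le hxE.le) (by norm_num))
            (mul_nonneg (by positivity) hPnn)
      _ ≤ ∫ t in (A + d/3)..(A + 2*d/3), h t := hint2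
      _ ≤ ∫ t in A..Bv, h t := hint1
      _ = σ * (T k).eval x := hσT.symm
      _ ≤ |(T k).eval x| := habs
  -- conclusion
  obtain ⟨c₀, δ₁, hc₀, hδ₁, hlow⟩ := hTlow
  obtain ⟨hTk_ne, hrm_le⟩ := ord_le_of_lower (T k) (N k) c₀ δ₁ hc₀ hδ₁ hlow
  obtain ⟨Ck, δk, hδk, hupk⟩ := hTup k hk1 hkm
  have hrm_ge : N k ≤ rootMultiplicity 0 (T k) :=
    ord_ge_of_upper (T k) hTk_ne (N k) Ck δk hδk hupk
  have hrmTk : rootMultiplicity 0 (T k) = N k := le_antisymm hrm_le hrm_ge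
  -- each other term is divisible by X^(N k + 1)
  have hdvd_other : ∀ ℓ, i ≤ ℓ → ℓ < j → ℓ ≠ k →
      (X - Polynomial.C (0:ℝ)) ^ (N k + 1) ∣ T ℓ := by
    intro ℓ h1 h2 h3
    by_cases hT0 : T ℓ = 0
    · rw [hT0]; exact dvd_zero _
    · obtain ⟨Cℓ, δℓ, hδℓ, hupℓ⟩ := hTup ℓ (le_trans hi h1) (by omega)
      have h4 : N ℓ ≤ rootMultiplicity 0 (T ℓ) :=
        ord_ge_of_upper (T ℓ) hT0 (N ℓ) Cℓ δℓ hδℓ hupℓ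
      have h5 : N k + 1 ≤ rootMultiplicity 0 (T ℓ) := le_trans (hNlt ℓ h1 h2 h3) h4
      exact dvd_trans (pow_dvd_pow _ h5) (pow_rootMultiplicity_dvd (T ℓ) 0)
  -- assemble the sum
  have hk_mem : k ∈ Finset.Ico i j := Finset.mem_Ico.mpr ⟨hik, hkj⟩
  have hsum_eq : (∑ ℓ ∈ Finset.Ico i j, Polynomial.C (ε ℓ) * T ℓ) =
      Polynomial.C (ε k) * T k +
        ∑ ℓ ∈ (Finset.Ico i j).erase k, Polynomial.C (ε ℓ) * T ℓ :=
    (Finset.add_sum_erase _ _ hk_mem).symm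
  have hεk2 : Polynomial.C (ε k) * Polynomial.C (ε k) = 1 := by
    rcases hε k with h | h <;> simp [h]
  have hf_ne : Polynomial.C (ε k) * T k ≠ 0 := by
    apply mul_ne_zero _ hTk_ne
    rcases hε k with h | h <;> simp [h]
  have hrm_f : rootMultiplicity 0 (Polynomial.C (ε k) * T k) = N k := by
    rw [rootMultiplicity_mul hf_ne, rootMultiplicity_C, hrmTk, zero_add]
  have hdvd_rest : (X - Polynomial.C (0:ℝ)) ^ (N k + 1) ∣
      ∑ ℓ ∈ (Finset.Ico i j).erase k, Polynomial.C (ε ℓ) * T ℓ := by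
    apply Finset.dvd_sum
    intro ℓ hℓ
    have hℓ' := Finset.mem_of_mem_erase hℓ
    obtain ⟨h1, h2⟩ := Finset.mem_Ico.mp hℓ'
    exact Dvd.dvd.mul_left (hdvd_other ℓ h1 h2 (Finset.ne_of_mem_erase hℓ)) _
  rw [hsum_eq]
  have := rm_add_eq (Polynomial.C (ε k) * T k)
    (∑ ℓ ∈ (Finset.Ico i j).erase k, Polynomial.C (ε ℓ) * T ℓ) hf_ne (by rw [hrm_f]; exact hdvd_rest)
  exact ⟨this.1, by rw [this.2, hrm_f, hrmTk]⟩
end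

section
/- Let m ≥ 1 and let e_1, …, e_m be positive integers. Then there exist polynomials a_1, …, a_{m+1} ∈ ℝ[X] such that a_i(0) = 0 for all i, a_i ≺₊ a_{i+1} for all 1 ≤ i ≤ m, and ord(a_{i+1} − a_i) = e_i for all 1 ≤ i ≤ m. (Consequently, by the contact formula, ord(a_j − a_i) = min_{i ≤ k < j} e_k for all i < j, so any end-rooted complete plane binary tree with m+1 leaves is realised as the contact tree of polynomials vanishing at 0.) -/
open Polynomial

theorem stmt_9 (m : ℕ) (hm : 1 ≤ m) (e : ℕ → ℕ) (he : ∀ i, 1 ≤ i → i ≤ m → 0 < e i) :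
    ∃ a : ℕ → Polynomial ℝ,
      (∀ i, 1 ≤ i → i ≤ m + 1 → (a i).eval 0 = 0) ∧
      (∀ i, 1 ≤ i → i ≤ m →
        PrecPlus (a i) (a (i + 1)) ∧ rootMultiplicity 0 (a (i + 1) - a i) = e i) := by
  refine ⟨fun i => ∑ k ∈ Finset.Ico 1 i, (X : Polynomial ℝ) ^ (e k), ?_, ?_⟩
  · intro i hi1 hi2
    simp only [eval_finset_sum, eval_pow, eval_X]
    apply Finset.sum_eq_zero
    intro k hk
    rw [Finset.mem_Ico] at hk
    have := he k hk.1 (by omega)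
    exact zero_pow (by omega)
  · intro i hi1 hi2
    simp only
    have hsum : (∑ k ∈ Finset.Ico 1 (i + 1), (X : Polynomial ℝ) ^ (e k)) =
        (∑ k ∈ Finset.Ico 1 i, (X : Polynomial ℝ) ^ (e k)) + X ^ (e i) :=
      Finset.sum_Ico_succ_top hi1 _
    constructor
    · refine ⟨1, one_pos, fun x hx hx1 => ?_⟩
      rw [hsum]
      simp only [eval_add, eval_pow, eval_X]
      have : (0:ℝ) < x ^ (e i) := pow_pos hx _
      linarith
    · rw [hsum, add_sub_cancel_left]
      have : (X : Polynomial ℝ) ^ (e i) = (X - C 0) ^ (e i) := by simp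
      rw [this, rootMultiplicity_X_sub_C_pow]
end

section
/- Let m ≥ 1 and let a_1, …, a_{m+1} ∈ ℝ[X] satisfy a_i(0) = 0 for all i and a_1 ≺₊ a_2 ≺₊ ⋯ ≺₊ a_{m+1}. Set e_i := ord(a_{i+1} − a_i) for 1 ≤ i ≤ m. Fix 1 ≤ i < j ≤ m+1 and suppose k ∈ {i,…,j−1} satisfies e_k < e_ℓ for all ℓ ∈ {i,…,j−1} with ℓ ≠ k. Then there exists x₀ > 0 such that for all 0 < x < x₀, (−1)^{m+1−k} · ∫_{a_i(x)}^{a_j(x)} ∏_{ℓ=1}^{m+1} (t − a_ℓ(x)) dt > 0. -/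
open Polynomial Filter Set

local notation "l0" => nhdsWithin (0:ℝ) (Set.Ioi 0)

lemma ev_iff {P : ℝ → Prop} :
    (∀ᶠ x in l0, P x) ↔ ∃ x₀ > (0:ℝ), ∀ x : ℝ, 0 < x → x < x₀ → P x := by
  rw [(nhdsGT_basis (0:ℝ)).eventually_iff]
  constructor
  · rintro ⟨b, hb, h⟩
    exact ⟨b, hb, fun x hx hxb => h ⟨hx, hxb⟩⟩
  · rintro ⟨b, hb, h⟩
    exact ⟨b, hb, fun x hx => h x hx.1 hx.2⟩

def PosP (f : Polynomial ℝ) : Prop := f ≠ 0 ∧ ∀ᶠ x in l0, 0 < f.eval x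

lemma posp_of_ev {f : Polynomial ℝ} (h : ∀ᶠ x in l0, 0 < f.eval x) : PosP f := by
  refine ⟨?_, h⟩
  rintro rfl
  simpa using h.exists

noncomputable def ord (f : Polynomial ℝ) : ℕ := rootMultiplicity 0 f

lemma posp_add {f g : Polynomial ℝ} (hf : PosP f) (hg : PosP g) : PosP (f + g) := by
  apply posp_of_ev
  filter_upwards [hf.2, hg.2] with x h1 h2
  simp only [eval_add]; linarith

lemma rep {f : Polynomial ℝ} (hf : PosP f) :
    ∃ g : Polynomial ℝ, f = X ^ (ord f) * g ∧ 0 < g.eval 0 := by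
  obtain ⟨g, hg, hnd⟩ := f.exists_eq_pow_rootMultiplicity_mul_and_not_dvd hf.1 0
  rw [map_zero, sub_zero] at hg hnd
  have hg0 : g.eval 0 ≠ 0 := fun h =>
    hnd (X_dvd_iff.2 (by rwa [coeff_zero_eq_eval_zero]))
  refine ⟨g, hg, ?_⟩
  have hev : ∀ᶠ x in l0, 0 ≤ g.eval x := by
    filter_upwards [hf.2, self_mem_nhdsWithin] with x hx (hx0 : (0:ℝ) < x)
    rw [hg] at hx
    simp only [eval_mul, eval_pow, eval_X] at hx
    have hp : (0:ℝ) < x ^ rootMultiplicity 0 f := pow_pos hx0 _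
    rcases mul_pos_iff.mp hx with ⟨_, h⟩ | ⟨h, _⟩
    · exact h.le
    · linarith
  have ht : Filter.Tendsto (fun x => g.eval x) l0 (nhds (g.eval 0)) :=
    (g.continuous_aeval.tendsto 0).mono_left nhdsWithin_le_nhds
  have := ge_of_tendsto ht hev
  exact lt_of_le_of_ne this (Ne.symm hg0)

lemma ord_of_rep {d : ℕ} {g : Polynomial ℝ} (hg : g.eval 0 ≠ 0) :
    ord (X ^ d * g) = d := by
  have hgne : g ≠ 0 := fun h => hg (by simp [h])
  have hne : (X:Polynomial ℝ) ^ d * g ≠ 0 := mul_ne_zero (pow_ne_zero _ X_ne_zero) hgne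
  unfold ord
  rw [rootMultiplicity_mul hne]
  have h1 : rootMultiplicity (0:ℝ) (X ^ d) = d := by
    have := rootMultiplicity_X_sub_C_pow (0:ℝ) d
    simpa using this
  have h2 : rootMultiplicity (0:ℝ) g = 0 := rootMultiplicity_eq_zero hg
  omega

lemma ord_add {f g : Polynomial ℝ} (hf : PosP f) (hg : PosP g) :
    ord (f + g) = min (ord f) (ord g) := by
  obtain ⟨u, hu, hu0⟩ := rep hf
  obtain ⟨v, hv, hv0⟩ := rep hg
  wlog hab : ord f ≤ ord g generalizing f g u v
  · rw [add_comm, this hg hf v hv hv0 u hu hu0 (le_of_not_ge hab), min_comm]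
  set A := ord f with hA
  set B := ord g with hB
  have : f + g = X ^ A * (u + X ^ (B - A) * v) := by
    rw [hu, hv, mul_add, ← mul_assoc, ← pow_add]
    congr 3
    omega
  have hw : 0 < (u + X ^ (B - A) * v).eval 0 := by
    simp only [eval_add, eval_mul, eval_pow, eval_X]
    rcases Nat.eq_zero_or_pos (ord g - ord f) with h | h
    · rw [h, pow_zero, one_mul]; positivity
    · rw [zero_pow (by omega), zero_mul, add_zero]; exact hu0
  rw [this, ord_of_rep hw.ne', min_eq_left hab]

lemma ord_mul {f g : Polynomial ℝ} (hf : f ≠ 0) (hg : g ≠ 0) :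
    ord (f * g) = ord f + ord g := rootMultiplicity_mul (mul_ne_zero hf hg)

lemma posp_mul {f g : Polynomial ℝ} (hf : PosP f) (hg : PosP g) : PosP (f * g) := by
  apply posp_of_ev
  filter_upwards [hf.2, hg.2] with x h1 h2
  simp only [eval_mul]; positivity

-- key comparison
lemma small {f g : Polynomial ℝ} (hf : PosP f) (hg : PosP g) (h : ord g < ord f)
    {c : ℝ} (hc : 0 < c) : ∀ᶠ x in l0, f.eval x < c * g.eval x := by
  obtain ⟨u, hu, hu0⟩ := rep hf
  obtain ⟨v, hv, hv0⟩ := rep hg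
  set A := ord f with hA
  set B := ord g with hB
  set φ : ℝ → ℝ := fun x => x ^ (A - B) * u.eval x - c * v.eval x with hφ
  have hcont : Continuous φ := by
    apply Continuous.sub
    · exact (continuous_pow _).mul u.continuous_aeval
    · exact continuous_const.mul v.continuous_aeval
  have hφ0 : φ 0 < 0 := by
    simp only [hφ, zero_pow (by omega : A - B ≠ 0), zero_mul, zero_sub, neg_neg]
    simp
    positivity
  have hev : ∀ᶠ x in l0, φ x < 0 :=
    ((hcont.tendsto 0).mono_left nhdsWithin_le_nhds).eventually_lt_const hφ0
  filter_upwards [hev, self_mem_nhdsWithin] with x hx (hx0 : (0:ℝ) < x)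
  have hfe : f.eval x = x ^ A * u.eval x := by rw [hu]; simp
  have hge : g.eval x = x ^ B * v.eval x := by rw [hv]; simp
  have : f.eval x - c * g.eval x = x ^ B * φ x := by
    have hpow : x ^ A = x ^ B * x ^ (A - B) := by
      rw [← pow_add]; congr 1; omega
    rw [hfe, hge, hφ, hpow]; ring
  nlinarith [pow_pos hx0 B]

lemma tele (m : ℕ) (a : ℕ → Polynomial ℝ)
    (hd : ∀ q, 1 ≤ q → q ≤ m → PosP (a (q+1) - a q)) :
    ∀ v u, 1 ≤ u → u < v → v ≤ m+1 →
      PosP (a v - a u) ∧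
      (∀ q, u ≤ q → q < v → ord (a v - a u) ≤ ord (a (q+1) - a q)) ∧
      (∃ q, u ≤ q ∧ q < v ∧ ord (a v - a u) = ord (a (q+1) - a q)) := by
  intro v
  induction v with
  | zero => omega
  | succ v ih =>
    intro u hu huv hv
    rcases eq_or_lt_of_le (Nat.lt_succ_iff.mp huv) with rfl | huv'
    · exact ⟨hd u hu (by omega), fun q h1 h2 => by
        have : q = u := by omega
        subst this; rfl, ⟨u, le_rfl, by omega, rfl⟩⟩
    · obtain ⟨hP, hLe, ⟨q0, hq01, hq02, hq03⟩⟩ := ih u hu huv' (by omega)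
      have hPv : PosP (a (v+1) - a v) := hd v (by omega) (by omega)
      have hsplit : a (v+1) - a u = (a (v+1) - a v) + (a v - a u) := by ring
      have hordeq : ord (a (v+1) - a u)
          = min (ord (a (v+1) - a v)) (ord (a v - a u)) := by
        rw [hsplit]; exact ord_add hPv hP
      refine ⟨by rw [hsplit]; exact posp_add hPv hP, ?_, ?_⟩
      · intro q h1 h2
        rcases eq_or_lt_of_le (Nat.lt_succ_iff.mp h2) with rfl | h2'
        · rw [hordeq]; exact min_le_left _ _
        · calc ord (a (v+1) - a u) ≤ ord (a v - a u) := hordeq ▸ min_le_right _ _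
            _ ≤ _ := hLe q h1 h2'
      · rcases le_total (ord (a (v+1) - a v)) (ord (a v - a u)) with h | h
        · exact ⟨v, by omega, by omega, by rw [hordeq, min_eq_left h]⟩
        · exact ⟨q0, hq01, by omega, by rw [hordeq, min_eq_right h, hq03]⟩

lemma posp_one : PosP 1 := ⟨one_ne_zero, by simp⟩

lemma ord_one : ord (1 : Polynomial ℝ) = 0 :=
  rootMultiplicity_eq_zero (by simp [IsRoot])

lemma ord_prod (s : Finset ℕ) (f : ℕ → Polynomial ℝ) (h : ∀ ℓ ∈ s, PosP (f ℓ)) :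
    PosP (∏ ℓ ∈ s, f ℓ) ∧ ord (∏ ℓ ∈ s, f ℓ) = ∑ ℓ ∈ s, ord (f ℓ) := by
  classical
  induction s using Finset.induction with
  | empty => simpa using ⟨posp_one, ord_one⟩
  | @insert b t hx ih =>
    have hb := h b (Finset.mem_insert_self b t)
    obtain ⟨hP, hord⟩ := ih (fun ℓ hℓ => h ℓ (Finset.mem_insert_of_mem hℓ))
    rw [Finset.prod_insert hx, Finset.sum_insert hx]
    exact ⟨posp_mul hb hP, by rw [ord_mul hb.1 hP.1, hord]⟩

lemma sign_prod (m p : ℕ) (hp : p ≤ m + 1) (A : ℕ → ℝ) (t : ℝ) :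
    (-1:ℝ)^(m+1-p) * ∏ ℓ ∈ Finset.Icc 1 (m+1), (t - A ℓ) =
      (∏ ℓ ∈ Finset.Icc 1 p, (t - A ℓ)) *
        ∏ ℓ ∈ Finset.Icc (p+1) (m+1), (A ℓ - t) := by
  have e1 : Finset.Icc 1 (m+1) = Finset.Ioc 0 (m+1) := by
    rw [← Finset.Icc_add_one_left_eq_Ioc]; rfl
  have e2 : Finset.Icc 1 p = Finset.Ioc 0 p := by
    rw [← Finset.Icc_add_one_left_eq_Ioc]; rfl
  have e3 : Finset.Icc (p+1) (m+1) = Finset.Ioc p (m+1) := by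
    rw [← Finset.Icc_add_one_left_eq_Ioc]
  rw [e1, e2, e3]
  rw [← Finset.prod_Ioc_consecutive (fun ℓ => (t - A ℓ)) (Nat.zero_le p) hp]
  have hneg : ∏ ℓ ∈ Finset.Ioc p (m+1), (A ℓ - t)
      = (-1:ℝ)^(m+1-p) * ∏ ℓ ∈ Finset.Ioc p (m+1), (t - A ℓ) := by
    have : ∀ ℓ ∈ Finset.Ioc p (m+1), (A ℓ - t) = -1 * (t - A ℓ) := by
      intro ℓ _; ring
    rw [Finset.prod_congr rfl this, Finset.prod_mul_distrib, Finset.prod_const,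
      Nat.card_Ioc]
  rw [hneg]
  ring

lemma int_upper {f : ℝ → ℝ} {A B M : ℝ} (hAB : A ≤ B) (hcont : Continuous f)
    (h0 : ∀ t ∈ Icc A B, 0 ≤ f t) (hM : ∀ t ∈ Icc A B, f t ≤ M) :
    0 ≤ (∫ t in A..B, f t) ∧ (∫ t in A..B, f t) ≤ (B - A) * M := by
  constructor
  · exact intervalIntegral.integral_nonneg hAB h0
  · have h := intervalIntegral.integral_mono_on (μ := MeasureTheory.volume)
      (g := fun _ => M) hAB (hcont.intervalIntegrable _ _) (intervalIntegrable_const) hM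
    simpa [mul_comm] using h

lemma int_lower {f : ℝ → ℝ} {A B A' B' mlow : ℝ} (h1 : A ≤ A') (h2 : A' ≤ B')
    (h3 : B' ≤ B) (hcont : Continuous f) (h0 : ∀ t ∈ Icc A B, 0 ≤ f t)
    (hm : ∀ t ∈ Icc A' B', mlow ≤ f t) :
    (B' - A') * mlow ≤ ∫ t in A..B, f t := by
  have hi : ∀ u v : ℝ, IntervalIntegrable f MeasureTheory.volume u v :=
    fun u v => hcont.intervalIntegrable u v
  have split : (∫ t in A..B, f t)
      = ((∫ t in A..A', f t) + ∫ t in A'..B', f t) + ∫ t in B'..B, f t := by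
    rw [intervalIntegral.integral_add_adjacent_intervals (hi _ _) (hi _ _),
      intervalIntegral.integral_add_adjacent_intervals (hi _ _) (hi _ _)]
  have b1 : 0 ≤ ∫ t in A..A', f t :=
    intervalIntegral.integral_nonneg h1
      (fun t ht => h0 t ⟨ht.1, le_trans ht.2 (le_trans h2 h3)⟩)
  have b3 : 0 ≤ ∫ t in B'..B, f t :=
    intervalIntegral.integral_nonneg h3
      (fun t ht => h0 t ⟨le_trans h1 (le_trans h2 ht.1), ht.2⟩)
  have b2 : (B' - A') * mlow ≤ ∫ t in A'..B', f t := by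
    have h := intervalIntegral.integral_mono_on (μ := MeasureTheory.volume)
      (f := fun _ => mlow) h2 intervalIntegrable_const (hcont.intervalIntegrable _ _) hm
    simpa [mul_comm] using h
  linarith [split, b1, b2, b3]

theorem stmt_10 (m : ℕ) (hm : 1 ≤ m) (a : ℕ → Polynomial ℝ)
    (hzero : ∀ i, 1 ≤ i → i ≤ m + 1 → (a i).eval 0 = 0)
    (hchain : ∀ i, 1 ≤ i → i ≤ m → PrecPlus (a i) (a (i + 1)))
    (i j k : ℕ) (hi : 1 ≤ i) (hij : i < j) (hj : j ≤ m + 1)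
    (hik : i ≤ k) (hkj : k < j)
    (hmin : ∀ ℓ, i ≤ ℓ → ℓ < j → ℓ ≠ k →
      rootMultiplicity 0 (a (k + 1) - a k) < rootMultiplicity 0 (a (ℓ + 1) - a ℓ)) :
    ∃ x₀ > (0 : ℝ), ∀ x : ℝ, 0 < x → x < x₀ →
      0 < (-1 : ℝ) ^ (m + 1 - k) *
        ∫ t in ((a i).eval x)..((a j).eval x),
          ∏ ℓ ∈ Finset.Icc 1 (m + 1), (t - (a ℓ).eval x) := by
  classical
  have hmin' : ∀ ℓ, i ≤ ℓ → ℓ < j → ℓ ≠ k →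
      ord (a (k + 1) - a k) < ord (a (ℓ + 1) - a ℓ) := hmin
  set S : Finset ℕ := Finset.Icc 1 (m+1) with hS
  have hd : ∀ q, 1 ≤ q → q ≤ m → PosP (a (q+1) - a q) := by
    intro q h1 h2
    apply posp_of_ev
    obtain ⟨x₀, hx₀, h⟩ := hchain q h1 h2
    rw [ev_iff]
    exact ⟨x₀, hx₀, fun x hx hxx => by
      simpa [eval_sub] using sub_pos.2 (h x hx hxx)⟩
  have htele := tele m a hd
  have hpair : ∀ u v, 1 ≤ u → u < v → v ≤ m+1 → PosP (a v - a u) :=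
    fun u v h1 h2 h3 => (htele v u h1 h2 h3).1
  set D : ℕ → ℕ → Polynomial ℝ :=
    fun p ℓ => if ℓ ≤ p then a (p+1) - a ℓ else a ℓ - a p with hD
  have hDpos : ∀ p ℓ, i ≤ p → p < j → 1 ≤ ℓ → ℓ ≤ m+1 → PosP (D p ℓ) := by
    intro p ℓ hp1 hp2 hl1 hl2
    rw [hD]; dsimp only; split_ifs with h
    · exact hpair ℓ (p+1) hl1 (by omega) (by omega)
    · exact hpair p ℓ (by omega) (by omega) hl2
  set P : ℕ → Polynomial ℝ := fun p => (a (p+1) - a p) * ∏ ℓ ∈ S, D p ℓ with hP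
  have hPposord : ∀ p, i ≤ p → p < j → PosP (P p) ∧
      ord (P p) = ord (a (p+1) - a p) + ∑ ℓ ∈ S, ord (D p ℓ) := by
    intro p hp1 hp2
    have hprod := ord_prod S (D p) (fun ℓ hl =>
      hDpos p ℓ hp1 hp2 (Finset.mem_Icc.mp hl).1 (Finset.mem_Icc.mp hl).2)
    have hdp : PosP (a (p+1) - a p) := hd p (by omega) (by omega)
    exact ⟨posp_mul hdp hprod.1, by
      rw [hP]; dsimp only; rw [ord_mul hdp.1 hprod.1.1, hprod.2]⟩
  have hterm : ∀ p, i ≤ p → p < j → p ≠ k → ∀ ℓ, 1 ≤ ℓ → ℓ ≤ m+1 →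
      ord (D k ℓ) ≤ ord (D p ℓ) := by
    intro p hp1 hp2 hpk ℓ hl1 hl2
    have hDk_le : ∀ q, ((ℓ ≤ k ∧ ℓ ≤ q ∧ q < k+1) ∨ (k < ℓ ∧ k ≤ q ∧ q < ℓ)) →
        ord (D k ℓ) ≤ ord (a (q+1) - a q) := by
      intro q hq
      rw [hD]; dsimp only
      rcases hq with ⟨h1,h2,h3⟩|⟨h1,h2,h3⟩
      · rw [if_pos h1]
        exact (htele (k+1) ℓ hl1 (by omega) (by omega)).2.1 q h2 h3
      · rw [if_neg (by omega)]
        exact (htele ℓ k (by omega) h1 hl2).2.1 q h2 h3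
    have hDk_lek : ord (D k ℓ) ≤ ord (a (k+1) - a k) := by
      by_cases h : ℓ ≤ k
      · exact hDk_le k (Or.inl ⟨h, h, by omega⟩)
      · exact hDk_le k (Or.inr ⟨by omega, le_rfl, by omega⟩)
    obtain ⟨q0, hq0a, hq0b, hq0c⟩ :
        ∃ q0, (if ℓ ≤ p then ℓ else p) ≤ q0 ∧ q0 < (if ℓ ≤ p then p+1 else ℓ) ∧
          ord (D p ℓ) = ord (a (q0+1) - a q0) := by
      rw [hD]; dsimp only; split_ifs with h
      · obtain ⟨q0,h1,h2,h3⟩ := (htele (p+1) ℓ hl1 (by omega) (by omega)).2.2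
        exact ⟨q0, h1, h2, h3⟩
      · obtain ⟨q0,h1,h2,h3⟩ := (htele ℓ p (by omega) (by omega) hl2).2.2
        exact ⟨q0, h1, h2, h3⟩
    rw [hq0c]
    by_cases hin : (ℓ ≤ k ∧ ℓ ≤ q0 ∧ q0 < k+1) ∨ (k < ℓ ∧ k ≤ q0 ∧ q0 < ℓ)
    · exact hDk_le q0 hin
    · have hq0range : i ≤ q0 ∧ q0 < j ∧ q0 ≠ k := by
        by_cases h : ℓ ≤ p
        · rw [if_pos h] at hq0a hq0b; omega
        · rw [if_neg h] at hq0a hq0b; omega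
      exact le_trans hDk_lek
        (le_of_lt (hmin' q0 hq0range.1 hq0range.2.1 hq0range.2.2))
  have hPord : ∀ p, i ≤ p → p < j → p ≠ k → ord (P k) < ord (P p) := by
    intro p hp1 hp2 hpk
    obtain ⟨_, hop⟩ := hPposord p hp1 hp2
    obtain ⟨_, hok⟩ := hPposord k hik hkj
    rw [hop, hok]
    have h1 : ord (a (k+1) - a k) < ord (a (p+1) - a p) := hmin' p hp1 hp2 hpk
    have h2 : ∑ ℓ ∈ S, ord (D k ℓ) ≤ ∑ ℓ ∈ S, ord (D p ℓ) :=
      Finset.sum_le_sum (fun ℓ hl => hterm p hp1 hp2 hpk ℓ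
        (Finset.mem_Icc.mp hl).1 (Finset.mem_Icc.mp hl).2)
    omega
  -- analytic part
  set c : ℝ := (1/2) * (1/4)^(m+1) with hc
  have hcpos : 0 < c := by rw [hc]; positivity
  set n : ℕ := j - i with hn
  have hnpos : 0 < (n:ℝ) := by
    have : 1 ≤ n := by omega
    exact_mod_cast this
  set ε : ℝ := c / (2*(n:ℝ)) with hε
  have hεpos : 0 < ε := by rw [hε]; positivity
  have hPk := hPposord k hik hkj
  have E1 : ∀ᶠ x in l0, ∀ q ∈ Finset.Icc 1 m,
      0 < (a (q+1)).eval x - (a q).eval x := by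
    rw [Finset.eventually_all]
    intro q hq
    obtain ⟨h1, h2⟩ := Finset.mem_Icc.mp hq
    filter_upwards [(hd q h1 h2).2] with y hy
    simpa [eval_sub] using hy
  have E2 : ∀ᶠ x in l0, ∀ p ∈ Finset.Ico i j, p ≠ k →
      (P p).eval x < ε * (P k).eval x := by
    rw [Finset.eventually_all]
    intro p hp
    obtain ⟨h1, h2⟩ := Finset.mem_Ico.mp hp
    by_cases hpk : p = k
    · exact Filter.Eventually.of_forall (fun x h => absurd hpk h)
    · filter_upwards [small (hPposord p h1 h2).1 hPk.1 (hPord p h1 h2 hpk) hεpos]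
        with y hy _
      exact hy
  have E3 : ∀ᶠ x in l0, 0 < (P k).eval x := hPk.1.2
  rw [← ev_iff]
  filter_upwards [E1, E2, E3, self_mem_nhdsWithin] with x hE1 hE2 hE3 hx0
  set A : ℕ → ℝ := fun ℓ => (a ℓ).eval x with hA
  have hstep : ∀ q, 1 ≤ q → q ≤ m → A q < A (q+1) := fun q h1 h2 => by
    have := hE1 q (Finset.mem_Icc.mpr ⟨h1, h2⟩); rw [hA]; dsimp only; linarith
  have hmono : ∀ u v, 1 ≤ u → u ≤ v → v ≤ m+1 → A u ≤ A v := by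
    intro u v h1 h2 h3
    induction v with
    | zero => exact absurd h2 (by omega)
    | succ v ih =>
      rcases Nat.lt_or_ge u (v+1) with h | h
      · have h4 : A u ≤ A v := ih (by omega) (by omega)
        have h5 : A v < A (v+1) := hstep v (by omega) (by omega)
        linarith
      · have : u = v + 1 := by omega
        rw [this]
  have hDeval : ∀ p ℓ, (D p ℓ).eval x
      = if ℓ ≤ p then A (p+1) - A ℓ else A ℓ - A p := by
    intro p ℓ; rw [hD]; dsimp only; split_ifs <;> simp [hA]
  set fI : ℝ → ℝ := fun t => ∏ ℓ ∈ S, (t - A ℓ) with hfI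
  have hcont : Continuous fI := by
    apply continuous_finset_prod
    exact fun ℓ _ => continuous_id.sub continuous_const
  have hPeval : ∀ p, (P p).eval x
      = (A (p+1) - A p) * ∏ ℓ ∈ S, (D p ℓ).eval x := by
    intro p; rw [hP]; simp [eval_prod, hA]
  -- generic facts per interval
  have keyfacts : ∀ p, i ≤ p → p < j →
      (∀ t ∈ Icc (A p) (A (p+1)),
        0 ≤ (∏ ℓ ∈ Finset.Icc 1 p, (t - A ℓ)) *
            ∏ ℓ ∈ Finset.Icc (p+1) (m+1), (A ℓ - t)) := by
    intro p hp1 hp2 t ht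
    apply mul_nonneg
    · apply Finset.prod_nonneg
      intro ℓ hl
      obtain ⟨ha1, ha2⟩ := Finset.mem_Icc.mp hl
      have := hmono ℓ p ha1 ha2 (by omega)
      have := ht.1
      linarith
    · apply Finset.prod_nonneg
      intro ℓ hl
      obtain ⟨ha1, ha2⟩ := Finset.mem_Icc.mp hl
      have := hmono (p+1) ℓ (by omega) ha1 ha2
      have := ht.2
      linarith
  have hprodsplit : ∀ (F : ℕ → ℝ) (p : ℕ), p ≤ m + 1 →
      ∏ ℓ ∈ S, F ℓ = (∏ ℓ ∈ Finset.Icc 1 p, F ℓ) *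
        ∏ ℓ ∈ Finset.Icc (p+1) (m+1), F ℓ := by
    intro F p hp
    have e1 : Finset.Icc 1 (m+1) = Finset.Ioc 0 (m+1) := by rw [← Finset.Icc_add_one_left_eq_Ioc]; rfl
    have e2 : Finset.Icc 1 p = Finset.Ioc 0 p := by rw [← Finset.Icc_add_one_left_eq_Ioc]; rfl
    have e3 : Finset.Icc (p+1) (m+1) = Finset.Ioc p (m+1) := by rw [← Finset.Icc_add_one_left_eq_Ioc]
    rw [hS, e1, e2, e3]
    exact (Finset.prod_Ioc_consecutive F (Nat.zero_le p) hp).symm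
  have keyup : ∀ p, i ≤ p → p < j →
      0 ≤ (-1:ℝ)^(m+1-p) * (∫ t in (A p)..(A (p+1)), fI t) ∧
      (-1:ℝ)^(m+1-p) * (∫ t in (A p)..(A (p+1)), fI t) ≤ (P p).eval x := by
    intro p hp1 hp2
    set g : ℝ → ℝ := fun t => (∏ ℓ ∈ Finset.Icc 1 p, (t - A ℓ)) *
      ∏ ℓ ∈ Finset.Icc (p+1) (m+1), (A ℓ - t) with hg
    have hgf : (fun t => (-1:ℝ)^(m+1-p) * fI t) = g := by
      funext t; exact sign_prod m p (by omega) A t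
    have hgc : Continuous g := by
      apply Continuous.mul
      · apply continuous_finset_prod
        exact fun ℓ _ => continuous_id.sub continuous_const
      · apply continuous_finset_prod
        exact fun ℓ _ => continuous_const.sub continuous_id
    have hABle : A p ≤ A (p+1) := (hstep p (by omega) (by omega)).le
    have h0 : ∀ t ∈ Icc (A p) (A (p+1)), 0 ≤ g t := keyfacts p hp1 hp2
    have hM : ∀ t ∈ Icc (A p) (A (p+1)), g t ≤ ∏ ℓ ∈ S, (D p ℓ).eval x := by
      intro t ht
      rw [hprodsplit (fun ℓ => (D p ℓ).eval x) p (by omega), hg]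
      apply mul_le_mul
      · apply Finset.prod_le_prod
        · intro ℓ hl
          obtain ⟨ha1, ha2⟩ := Finset.mem_Icc.mp hl
          have := hmono ℓ p ha1 ha2 (by omega)
          have := ht.1
          linarith
        · intro ℓ hl
          obtain ⟨ha1, ha2⟩ := Finset.mem_Icc.mp hl
          rw [hDeval p ℓ, if_pos ha2]
          have := ht.2
          linarith
      · apply Finset.prod_le_prod
        · intro ℓ hl
          obtain ⟨ha1, ha2⟩ := Finset.mem_Icc.mp hl
          have := hmono (p+1) ℓ (by omega) ha1 ha2
          have := ht.2
          linarith
        · intro ℓ hl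
          obtain ⟨ha1, ha2⟩ := Finset.mem_Icc.mp hl
          rw [hDeval p ℓ, if_neg (by omega)]
          have := ht.1
          linarith
      · apply Finset.prod_nonneg
        intro ℓ hl
        obtain ⟨ha1, ha2⟩ := Finset.mem_Icc.mp hl
        have := hmono (p+1) ℓ (by omega) ha1 ha2
        have := ht.2
        linarith
      · apply Finset.prod_nonneg
        intro ℓ hl
        obtain ⟨ha1, ha2⟩ := Finset.mem_Icc.mp hl
        rw [hDeval p ℓ, if_pos ha2]
        have h6 := hmono ℓ (p+1) ha1 (by omega) (by omega)
        linarith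
    obtain ⟨hb1, hb2⟩ := int_upper hABle hgc h0 hM
    have hIg : (∫ t in (A p)..(A (p+1)), g t)
        = (-1:ℝ)^(m+1-p) * ∫ t in (A p)..(A (p+1)), fI t := by
      rw [← hgf, intervalIntegral.integral_const_mul]
    rw [hIg] at hb1 hb2
    refine ⟨hb1, le_trans hb2 ?_⟩
    rw [hPeval p]
  have keylow :
      c * (P k).eval x ≤ (-1:ℝ)^(m+1-k) * ∫ t in (A k)..(A (k+1)), fI t := by
    set g : ℝ → ℝ := fun t => (∏ ℓ ∈ Finset.Icc 1 k, (t - A ℓ)) *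
      ∏ ℓ ∈ Finset.Icc (k+1) (m+1), (A ℓ - t) with hg
    have hgf : (fun t => (-1:ℝ)^(m+1-k) * fI t) = g := by
      funext t; exact sign_prod m k (by omega) A t
    have hgc : Continuous g := by
      apply Continuous.mul
      · apply continuous_finset_prod
        exact fun ℓ _ => continuous_id.sub continuous_const
      · apply continuous_finset_prod
        exact fun ℓ _ => continuous_const.sub continuous_id
    set δ : ℝ := A (k+1) - A k with hδ
    have hδpos : 0 < δ := by
      have := hstep k (by omega) (by omega); rw [hδ]; linarith
    have h0 : ∀ t ∈ Icc (A k) (A (k+1)), 0 ≤ g t := keyfacts k hik hkj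
    have hmlow : ∀ t ∈ Icc (A k + δ/4) (A (k+1) - δ/4),
        ∏ ℓ ∈ S, ((1/4:ℝ) * (D k ℓ).eval x) ≤ g t := by
      intro t ht
      rw [hprodsplit (fun ℓ => (1/4:ℝ) * (D k ℓ).eval x) k (by omega), hg]
      apply mul_le_mul
      · apply Finset.prod_le_prod
        · intro ℓ hl
          obtain ⟨ha1, ha2⟩ := Finset.mem_Icc.mp hl
          rw [hDeval k ℓ, if_pos ha2]
          have := hmono ℓ (k+1) ha1 (by omega) (by omega)
          linarith
        · intro ℓ hl
          obtain ⟨ha1, ha2⟩ := Finset.mem_Icc.mp hl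
          rw [hDeval k ℓ, if_pos ha2]
          have h6 := hmono ℓ k ha1 ha2 (by omega)
          have h7 := ht.1
          rw [hδ] at h7
          linarith
      · apply Finset.prod_le_prod
        · intro ℓ hl
          obtain ⟨ha1, ha2⟩ := Finset.mem_Icc.mp hl
          rw [hDeval k ℓ, if_neg (by omega)]
          have := hmono k ℓ (by omega) (by omega) ha2
          linarith
        · intro ℓ hl
          obtain ⟨ha1, ha2⟩ := Finset.mem_Icc.mp hl
          rw [hDeval k ℓ, if_neg (by omega)]
          have h6 := hmono (k+1) ℓ (by omega) ha1 ha2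
          have h7 := ht.2
          rw [hδ] at h7
          linarith
      · apply Finset.prod_nonneg
        intro ℓ hl
        obtain ⟨ha1, ha2⟩ := Finset.mem_Icc.mp hl
        rw [hDeval k ℓ, if_neg (by omega)]
        have h6 := hmono k ℓ (by omega) (by omega) ha2
        linarith
      · apply Finset.prod_nonneg
        intro ℓ hl
        obtain ⟨ha1, ha2⟩ := Finset.mem_Icc.mp hl
        have h6 := hmono ℓ k ha1 ha2 (by omega)
        have h7 := ht.1
        linarith
    have hlow := int_lower (by linarith : A k ≤ A k + δ/4)
      (by rw [hδ]; linarith : A k + δ/4 ≤ A (k+1) - δ/4)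
      (by linarith : A (k+1) - δ/4 ≤ A (k+1)) hgc h0 hmlow
    have hIg : (∫ t in (A k)..(A (k+1)), g t)
        = (-1:ℝ)^(m+1-k) * ∫ t in (A k)..(A (k+1)), fI t := by
      rw [← hgf, intervalIntegral.integral_const_mul]
    rw [hIg] at hlow
    refine le_trans (le_of_eq ?_) hlow
    rw [hPeval k, Finset.prod_mul_distrib, Finset.prod_const]
    have hcard : S.card = m + 1 := by rw [hS, Nat.card_Icc]; omega
    rw [hcard, hc]
    have : A (k+1) - δ/4 - (A k + δ/4) = δ/2 := by rw [hδ]; ring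
    rw [this, hδ]
    ring
  -- assemble
  have hsplit : (∫ t in (A i)..(A j), fI t)
      = ∑ p ∈ Finset.Ico i j, ∫ t in (A p)..(A (p+1)), fI t :=
    (intervalIntegral.sum_integral_adjacent_intervals_Ico
      (μ := MeasureTheory.volume) (a := A) (le_of_lt hij)
      (fun p _ => hcont.intervalIntegrable _ _)).symm
  have hksum : k ∈ Finset.Ico i j := Finset.mem_Ico.mpr ⟨hik, hkj⟩
  set s : ℝ := (-1:ℝ)^(m+1-k) with hs
  have habs : ∀ p, i ≤ p → p < j → p ≠ k →
      -(ε * (P k).eval x) ≤ s * ∫ t in (A p)..(A (p+1)), fI t := by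
    intro p hp1 hp2 hpk
    obtain ⟨hb1, hb2⟩ := keyup p hp1 hp2
    have hPp := hE2 p (Finset.mem_Ico.mpr ⟨hp1, hp2⟩) hpk
    have habs1 : |(∫ t in (A p)..(A (p+1)), fI t)| ≤ (P p).eval x := by
      have h1 : |(-1:ℝ)^(m+1-p)| = 1 := by
        rw [abs_pow, abs_neg, abs_one, one_pow]
      calc |(∫ t in (A p)..(A (p+1)), fI t)|
          = |(-1:ℝ)^(m+1-p) * ∫ t in (A p)..(A (p+1)), fI t| := by
            rw [abs_mul, h1, one_mul]
        _ = (-1:ℝ)^(m+1-p) * ∫ t in (A p)..(A (p+1)), fI t := abs_of_nonneg hb1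
        _ ≤ _ := hb2
    have habs2 : |s * ∫ t in (A p)..(A (p+1)), fI t|
        ≤ (P p).eval x := by
      rw [abs_mul, hs, abs_pow, abs_neg, abs_one, one_pow, one_mul]
      exact habs1
    have := neg_abs_le (s * ∫ t in (A p)..(A (p+1)), fI t)
    linarith
  rw [hsplit, Finset.mul_sum]
  rw [← Finset.add_sum_erase _ _ hksum]
  have hsumlow : ∑ p ∈ (Finset.Ico i j).erase k,
      (s * ∫ t in (A p)..(A (p+1)), fI t)
      ≥ -(((n:ℝ) * (ε * (P k).eval x))) := by
    have h1 : ∀ p ∈ (Finset.Ico i j).erase k,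
        -(ε * (P k).eval x) ≤ s * ∫ t in (A p)..(A (p+1)), fI t := by
      intro p hp
      have hpm := Finset.mem_of_mem_erase hp
      obtain ⟨hp1, hp2⟩ := Finset.mem_Ico.mp hpm
      exact habs p hp1 hp2 (Finset.ne_of_mem_erase hp)
    have h2 := Finset.sum_le_sum h1
    rw [Finset.sum_const] at h2
    have hcard : (((Finset.Ico i j).erase k).card : ℝ) ≤ (n:ℝ) := by
      have : ((Finset.Ico i j).erase k).card = n - 1 := by
        rw [Finset.card_erase_of_mem hksum, Nat.card_Ico, hn]
      rw [this]
      exact_mod_cast Nat.sub_le n 1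
    have h3 : (((Finset.Ico i j).erase k).card : ℝ) • (-(ε * (P k).eval x))
        ≥ -((n:ℝ) * (ε * (P k).eval x)) := by
      rw [smul_eq_mul]
      have := mul_le_mul_of_nonneg_right hcard (le_of_lt (mul_pos hεpos hE3))
      nlinarith [hεpos, hE3, hcard]
    calc ∑ p ∈ (Finset.Ico i j).erase k, (s * ∫ t in (A p)..(A (p+1)), fI t)
        ≥ (((Finset.Ico i j).erase k).card : ℝ) • (-(ε * (P k).eval x)) := by
          simpa using h2
      _ ≥ _ := h3
  have hεeq : (n:ℝ) * ε = c / 2 := by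
    rw [hε]; field_simp
  nlinarith [keylow, hsumlow, hE3, hcpos, hεeq]
end

section
/- Let m ≥ 1 and let a_1, …, a_{m+1} ∈ ℝ[X] satisfy a_i(0) = 0 for all i and a_1 ≺₊ a_2 ≺₊ ⋯ ≺₊ a_{m+1}. Set e_i := ord(a_{i+1} − a_i) for 1 ≤ i ≤ m, and assume that for every pair 1 ≤ i < j ≤ m+1 the minimum of e_i, e_{i+1}, …, e_{j−1} is attained at a unique index. Then there exists x₀ > 0 such that for all 0 < x < x₀: the real numbers a_1(x) < a_2(x) < ⋯ < a_{m+1}(x) are distinct, they are exactly the (simple) critical points of the polynomial Q_x(y) := ∫_0^y ∏_{ℓ=1}^{m+1}(t − a_ℓ(x)) dt, and the critical values Q_x(a_1(x)), …, Q_x(a_{m+1}(x)) are pairwise distinct; in particular (m+2)·Q_x is an (m+2)-Morse polynomial. -/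
open Polynomial Filter

noncomputable section AuxMorse
set_option linter.unusedSectionVars false
set_option linter.unusedVariables false

variable {R S : Type*} [CommRing R] [Algebra ℚ R] [CommRing S] [Algebra ℚ S]
  [NoZeroSMulDivisors ℕ S]

/-- formal antiderivative with zero constant term -/
def antider (p : R[X]) : R[X] := p.sum fun n c => C ((n+1:ℚ)⁻¹ • c) * X^(n+1)

theorem antider_def (p : R[X]) : antider p = p.sum fun n c => C ((n+1:ℚ)⁻¹ • c) * X^(n+1) := rfl

theorem smul_cancel_aux (n : ℕ) (c : R) : ((n+1:ℚ)⁻¹ • c) * ((n : R) + 1) = c := by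
  have h1 : ((n : R) + 1) = ((n + 1 : ℕ) : R) := by push_cast; ring
  rw [h1, mul_comm, ← nsmul_eq_mul, ← Nat.cast_smul_eq_nsmul ℚ, smul_smul]
  have h2 : ((n + 1 : ℕ) : ℚ) * ((n : ℚ) + 1)⁻¹ = 1 := by
    have : ((n:ℚ) + 1) ≠ 0 := by positivity
    push_cast
    field_simp
  rw [show ((n+1:ℚ)) = ((n:ℚ)+1) by push_cast; ring, h2, one_smul]

theorem derivative_antider (p : R[X]) : derivative (antider p) = p := by
  conv_rhs => rw [← sum_C_mul_X_pow_eq p]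
  rw [antider, Polynomial.sum, Polynomial.sum, derivative_sum]
  refine Finset.sum_congr rfl fun n hn => ?_
  rw [derivative_C_mul_X_pow, Nat.add_sub_cancel]
  congr 1
  rw [show ((n+1:ℕ):R) = (n:R)+1 by push_cast; ring]
  exact congrArg C (smul_cancel_aux n (p.coeff n))

theorem coeff_zero_antider (p : R[X]) : (antider p).coeff 0 = 0 := by
  rw [antider, Polynomial.sum, finset_sum_coeff]
  refine Finset.sum_eq_zero fun n hn => ?_
  rw [coeff_C_mul, coeff_X_pow]
  simp

theorem eval_zero_antider (p : R[X]) : (antider p).eval 0 = 0 := by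
  rw [← coeff_zero_eq_eval_zero, coeff_zero_antider]

/-- uniqueness of antiderivative in char-zero domains -/
theorem antider_unique {S : Type*} [CommRing S] [Algebra ℚ S] [NoZeroSMulDivisors ℕ S]
    {p q : S[X]} (hd : derivative q = p) (h0 : q.coeff 0 = 0) : q = antider p := by
  have h : derivative (q - antider p) = 0 := by
    rw [derivative_sub, hd, derivative_antider, sub_self]
  haveI : IsAddTorsionFree S := .of_module_rat S
  have := eq_C_of_derivative_eq_zero h
  have h2 : (q - antider p).coeff 0 = 0 := by
    rw [coeff_sub, h0, coeff_zero_antider, sub_zero]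
  rw [h2, map_zero] at this
  exact sub_eq_zero.mp this



theorem antider_map (φ : R →+* S) (p : R[X]) : (antider p).map φ = antider (p.map φ) :=
  antider_unique (by rw [derivative_map, derivative_antider]) (by rw [coeff_map, coeff_zero_antider, map_zero])

theorem eq_of_deriv_eq {q q' : S[X]} (h : derivative q = derivative q') (h0 : q.coeff 0 = q'.coeff 0) : q = q' := by
  have h1 : derivative (q - q') = 0 := by rw [derivative_sub, h, sub_self]
  haveI : IsAddTorsionFree S := .of_module_rat S
  have := eq_C_of_derivative_eq_zero h1
  rw [coeff_sub, h0, sub_self, map_zero] at this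
  exact sub_eq_zero.mp this

theorem integral_eval (p : ℝ[X]) (A B : ℝ) :
    (∫ t in A..B, p.eval t) = (antider p).eval B - (antider p).eval A := by
  refine intervalIntegral.integral_eq_sub_of_hasDerivAt (f := fun t => (antider p).eval t) (fun t _ => ?_) (p.continuous.intervalIntegrable A B)
  simpa [derivative_antider] using (antider p).hasDerivAt t

theorem eventually_ne_zero_of_ne {p : ℝ[X]} (hp : p ≠ 0) :
    ∀ᶠ x in nhdsWithin (0:ℝ) (Set.Ioi 0), p.eval x ≠ 0 := by
  have hfin : {x : ℝ | p.IsRoot x}.Finite := Polynomial.finite_setOf_isRoot hp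
  have hcl : IsClosed ({x : ℝ | p.IsRoot x} \ {0}) := ((hfin.subset Set.diff_subset).isClosed)
  have h0 : (0:ℝ) ∈ ({x : ℝ | p.IsRoot x} \ {0})ᶜ := by simp
  have h1 : ∀ᶠ x in nhds (0:ℝ), x ∈ ({x : ℝ | p.IsRoot x} \ {0})ᶜ :=
    hcl.isOpen_compl.eventually_mem h0
  have h2 : ∀ᶠ x in nhdsWithin (0:ℝ) (Set.Ioi 0), x ∈ ({x : ℝ | p.IsRoot x} \ {0})ᶜ :=
    nhdsWithin_le_nhds h1
  filter_upwards [h2, self_mem_nhdsWithin] with x hx hx'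
  intro hev
  exact hx ⟨hev, by simp only [Set.mem_singleton_iff]; exact ne_of_gt (hx' : (0:ℝ) < x) ⟩

/-- factor out the trailing power of X -/
theorem exists_trailing_factor {p : ℝ[X]} (hp : p ≠ 0) :
    ∃ g : ℝ[X], p = X ^ p.natTrailingDegree * g ∧ g.coeff 0 = p.trailingCoeff := by
  obtain ⟨g, hg⟩ := (X_pow_dvd_iff (n := p.natTrailingDegree)).mpr
    (fun d hd => coeff_eq_zero_of_lt_natTrailingDegree hd)
  refine ⟨g, hg, ?_⟩
  have := coeff_X_pow_mul g p.natTrailingDegree 0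
  rw [← hg] at this
  rw [← this]
  simp [trailingCoeff]

theorem trailingCoeff_pos_of_eventually_pos {p : ℝ[X]} (hp : p ≠ 0)
    (hpos : ∀ᶠ x in nhdsWithin (0:ℝ) (Set.Ioi 0), 0 < p.eval x) : 0 < p.trailingCoeff := by
  obtain ⟨g, hg, hg0⟩ := exists_trailing_factor hp
  have hgc : ContinuousAt (fun x => g.eval x) 0 := g.continuous.continuousAt
  rcases lt_trichotomy (0:ℝ) p.trailingCoeff with h | h | h
  · exact h
  · exfalso
    have : g.coeff 0 ≠ 0 := by rw [hg0]; exact trailingCoeff_nonzero_iff_nonzero.mpr hp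
    rw [hg0, ← h] at this; exact this rfl
  · exfalso
    have hev : ∀ᶠ x in nhds (0:ℝ), g.eval x < 0 := by
      have : g.eval 0 < 0 := by rw [← coeff_zero_eq_eval_zero, hg0]; exact h
      exact hgc.eventually_lt_const this  -- name?
    have hev' : ∀ᶠ x in nhdsWithin (0:ℝ) (Set.Ioi 0), g.eval x < 0 := nhdsWithin_le_nhds hev
    have : ∀ᶠ x in nhdsWithin (0:ℝ) (Set.Ioi 0), False := by
      filter_upwards [hpos, hev', self_mem_nhdsWithin] with x h1 h2 h3
      have hx : (0:ℝ) < x := h3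
      have : p.eval x = x ^ p.natTrailingDegree * g.eval x := by
        conv_lhs => rw [hg]
        simp
      nlinarith [pow_pos hx p.natTrailingDegree]
    obtain ⟨x, hx⟩ := this.exists
    exact hx


theorem coeff_antider_succ (p : ℝ[X]) (n : ℕ) :
    (antider p).coeff (n+1) = ((n+1:ℚ))⁻¹ • p.coeff n := by
  rw [antider_def, Polynomial.sum, finset_sum_coeff]
  by_cases hn : n ∈ p.support
  · rw [Finset.sum_eq_single n]
    · rw [coeff_C_mul, coeff_X_pow, if_pos rfl, mul_one]
    · intro b _ hb
      rw [coeff_C_mul, coeff_X_pow, if_neg (by omega), mul_zero]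
    · intro h; exact absurd hn h
  · have h0 : p.coeff n = 0 := Polynomial.notMem_support_iff.mp hn
    rw [h0, smul_zero]
    refine Finset.sum_eq_zero fun b hb => ?_
    rw [coeff_C_mul, coeff_X_pow, if_neg, mul_zero]
    intro h
    exact hn (by rwa [show b = n by omega] at hb)

theorem natDegree_antider {p : ℝ[X]} (hp : p ≠ 0) :
    (antider p).natDegree = p.natDegree + 1 := by
  have hne : (antider p).coeff (p.natDegree + 1) ≠ 0 := by
    rw [coeff_antider_succ]
    rw [Rat.smul_def]
    refine mul_ne_zero (by positivity) (leadingCoeff_ne_zero.mpr hp)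
  refine le_antisymm ?_ (le_natDegree_of_ne_zero hne)
  refine natDegree_le_iff_coeff_eq_zero.mpr fun j hj => ?_
  obtain ⟨k, rfl⟩ : ∃ k, j = k + 1 := ⟨j - 1, by omega⟩
  rw [coeff_antider_succ, coeff_eq_zero_of_natDegree_lt (by omega), smul_zero]

theorem coeff_antider_top {p : ℝ[X]} (hp : p ≠ 0) :
    (antider p).coeff (p.natDegree + 1) = ((p.natDegree + 1 : ℚ))⁻¹ • p.leadingCoeff := by
  rw [coeff_antider_succ, leadingCoeff]

/-- The per-x analysis of Q. -/
theorem Q_props (n : ℕ) (hn : 1 ≤ n) (r : ℕ → ℝ)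
    (hr : ∀ i j, 1 ≤ i → i < j → j ≤ n + 1 → r i < r j)
    (Q : ℝ → ℝ)
    (hQ : ∀ y : ℝ, Q y = ∫ t in (0:ℝ)..y, ∏ ℓ ∈ Finset.Icc 1 (n+1), (t - r ℓ)) :
    (∀ y : ℝ, Q y = (antider (∏ ℓ ∈ Finset.Icc 1 (n+1), (X - C (r ℓ)))).eval y) ∧
    (∀ y : ℝ, deriv Q y = 0 ↔ ∃ ℓ, 1 ≤ ℓ ∧ ℓ ≤ n + 1 ∧ y = r ℓ) ∧
    (∀ ℓ, 1 ≤ ℓ → ℓ ≤ n + 1 → deriv (deriv Q) (r ℓ) ≠ 0) ∧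
    (∃ R : Polynomial ℝ, R.Monic ∧ R.natDegree = n + 2 ∧
      ∀ y : ℝ, R.eval y = (n + 2 : ℝ) * Q y) := by
  set P : ℝ[X] := ∏ ℓ ∈ Finset.Icc 1 (n+1), (X - C (r ℓ)) with hP
  have hPeval : ∀ t : ℝ, P.eval t = ∏ ℓ ∈ Finset.Icc 1 (n+1), (t - r ℓ) := by
    intro t; rw [hP, eval_prod]; exact Finset.prod_congr rfl fun ℓ _ => by simp
  have hQS : ∀ y, Q y = (antider P).eval y := by
    intro y
    rw [hQ y, show (∫ t in (0:ℝ)..y, ∏ ℓ ∈ Finset.Icc 1 (n+1), (t - r ℓ))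
        = ∫ t in (0:ℝ)..y, P.eval t from by simp_rw [hPeval],
      integral_eval, eval_zero_antider, sub_zero]
  have hQfun : Q = fun y => (antider P).eval y := funext hQS
  have hderiv : deriv Q = fun y => P.eval y := by
    rw [hQfun]
    funext y
    rw [Polynomial.deriv, derivative_antider]
  have hPmonic : P.Monic := monic_prod_of_monic _ _ fun ℓ _ => monic_X_sub_C (r ℓ)
  have hPdeg : P.natDegree = n + 1 := by
    rw [hP, natDegree_prod_of_monic _ _ fun ℓ _ => monic_X_sub_C (r ℓ)]
    simp [natDegree_X_sub_C]
  refine ⟨hQS, ?_, ?_, ?_⟩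
  · intro y
    rw [hderiv]
    simp only [hPeval y]
    rw [Finset.prod_eq_zero_iff]
    constructor
    · rintro ⟨ℓ, hℓ, h⟩
      rw [Finset.mem_Icc] at hℓ
      exact ⟨ℓ, hℓ.1, hℓ.2, by linarith⟩
    · rintro ⟨ℓ, h1, h2, rfl⟩
      exact ⟨ℓ, Finset.mem_Icc.mpr ⟨h1, h2⟩, by ring⟩
  · intro ℓ h1 h2
    have h2' : deriv (deriv Q) = fun y => (derivative P).eval y := by
      rw [hderiv]; funext y; rw [Polynomial.deriv]
    rw [h2']
    have hmem : ℓ ∈ Finset.Icc 1 (n+1) := Finset.mem_Icc.mpr ⟨h1, h2⟩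
    have hsplit : P = (X - C (r ℓ)) * ∏ a ∈ (Finset.Icc 1 (n+1)).erase ℓ, (X - C (r a)) :=
      (Finset.mul_prod_erase _ _ hmem).symm
    have hdP : (derivative P).eval (r ℓ)
        = ∏ a ∈ (Finset.Icc 1 (n+1)).erase ℓ, (r ℓ - r a) := by
      rw [hsplit, derivative_mul, derivative_sub, derivative_X, derivative_C, sub_zero,
        eval_add, eval_mul, eval_mul, eval_sub, eval_X, eval_C, sub_self, zero_mul, add_zero,
        eval_one, one_mul, eval_prod]
      exact Finset.prod_congr rfl fun a _ => by simp
    show eval (r ℓ) (derivative P) ≠ 0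
    rw [hdP]
    refine Finset.prod_ne_zero_iff.mpr fun a ha => ?_
    rw [Finset.mem_erase, Finset.mem_Icc] at ha
    rcases lt_or_gt_of_ne ha.1 with h | h
    · have := hr a ℓ ha.2.1 h h2
      linarith
    · have := hr ℓ a h1 h ha.2.2
      linarith
  · refine ⟨C ((n:ℝ) + 2) * antider P, ?_, ?_, ?_⟩
    · have hPne : P ≠ 0 := hPmonic.ne_zero
      have hdeg : (C ((n:ℝ) + 2) * antider P).natDegree = n + 2 := by
        rw [natDegree_C_mul (by positivity), natDegree_antider hPne, hPdeg]
      rw [Monic, leadingCoeff, hdeg]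
      rw [coeff_C_mul]
      have := coeff_antider_top hPne
      rw [hPdeg] at this
      rw [show n + 2 = (n+1) + 1 from rfl, this, hPmonic.leadingCoeff, Rat.smul_def]
      push_cast
      rw [show ((n:ℝ)+1+1) = (n:ℝ)+2 by ring]
      rw [mul_one]
      exact mul_inv_cancel₀ (by positivity : ((n:ℝ)+2) ≠ 0)
    · rw [natDegree_C_mul (by positivity), natDegree_antider hPmonic.ne_zero, hPdeg]
    · intro y
      rw [eval_mul, eval_C, hQS y]

theorem telescope (a : ℕ → Polynomial ℝ) {p q : ℕ} (h : p ≤ q) :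
    a q - a p = ∑ l ∈ Finset.Ico p q, (a (l+1) - a l) := by
  induction q, h using Nat.le_induction with
  | base => simp
  | succ q hq ih => rw [Finset.sum_Ico_succ_top (by omega), ← ih]; ring

theorem hom_eval (φ : Polynomial ℝ →+* ℝ) (T : Polynomial (Polynomial ℝ)) (β : Polynomial ℝ) :
    φ (T.eval β) = (T.map φ).eval (φ β) := by
  rw [eval_map, eval₂_hom]

set_option maxHeartbeats 1000000 in
theorem core (m i j : ℕ) (a : ℕ → Polynomial ℝ)
    (h1i : 1 ≤ i) (hij : i < j) (hjm : j ≤ m + 1)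
    (hev : ∀ p q, 1 ≤ p → p < q → q ≤ m + 1 →
      ∀ᶠ x in nhdsWithin (0:ℝ) (Set.Ioi 0), 0 < (a q - a p).eval x)
    (hbin : ∃ k ∈ Finset.Ico i j, ∀ ℓ ∈ Finset.Ico i j, ℓ ≠ k →
      (a (k+1) - a k).natTrailingDegree < (a (ℓ+1) - a ℓ).natTrailingDegree) :
    (antider (∏ ℓ ∈ Finset.Icc 1 (m+1), (X - C (a ℓ)))).eval (a j)
      ≠ (antider (∏ ℓ ∈ Finset.Icc 1 (m+1), (X - C (a ℓ)))).eval (a i) := by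
  classical
  set I : Finset ℕ := Finset.Icc 1 (m+1) with hI
  have hne : ∀ p q : ℕ, 1 ≤ p → p < q → q ≤ m + 1 → a q - a p ≠ 0 := by
    intro p q h1 h2 h3 h0
    obtain ⟨x, hx⟩ := (hev p q h1 h2 h3).exists
    rw [h0] at hx; simp at hx
  obtain ⟨k, hkmem, hkuniq⟩ := hbin
  rw [Finset.mem_Ico] at hkmem
  set e : ℕ := (a (k+1) - a k).natTrailingDegree with he
  have hek : a (k+1) - a k ≠ 0 := hne k (k+1) (by omega) (by omega) (by omega)
  set b : ℕ → Polynomial ℝ := fun ℓ => a ℓ - a i with hb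
  have hvan : ∀ p q d : ℕ, p ≤ q →
      (∀ l ∈ Finset.Ico p q, d < (a (l+1) - a l).natTrailingDegree) →
      (a q - a p).coeff d = 0 := by
    intro p q d hpq hlt
    rw [telescope a hpq, finset_sum_coeff]
    exact Finset.sum_eq_zero fun l hl => coeff_eq_zero_of_lt_natTrailingDegree (hlt l hl)
  have hIk : ∀ l ∈ Finset.Ico i j, e ≤ (a (l+1) - a l).natTrailingDegree := by
    intro l hl
    by_cases hlk : l = k
    · rw [hlk]
    · exact le_of_lt (hkuniq l hl hlk)
  have hbj_low : ∀ d, d < e → (b j).coeff d = 0 := fun d hd =>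
    hvan i j d (le_of_lt hij) (fun l hl => lt_of_lt_of_le hd (hIk l hl))
  set c : ℝ := (b j).coeff e with hc
  have hcval : c = (a (k+1) - a k).trailingCoeff := by
    rw [hc]
    show (a j - a i).coeff e = _
    rw [telescope a (le_of_lt hij), finset_sum_coeff, Finset.sum_eq_single k]
    · rfl
    · intro l hl hlk; exact coeff_eq_zero_of_lt_natTrailingDegree (hkuniq l hl hlk)
    · intro h; exact absurd (Finset.mem_Ico.mpr hkmem) h
  have hcne : c ≠ 0 := by rw [hcval]; exact trailingCoeff_nonzero_iff_nonzero.mpr hek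
  have hbjne : b j ≠ 0 := fun h => hcne (by rw [hc, h, coeff_zero])
  have hbjntd : (b j).natTrailingDegree = e :=
    le_antisymm (natTrailingDegree_le_of_ne_zero hcne) (le_natTrailingDegree hbjne hbj_low)
  have hcpos : 0 < c := by
    have h1 : (b j).trailingCoeff = c := by rw [trailingCoeff, hbjntd]
    rw [← h1]
    exact trailingCoeff_pos_of_eventually_pos hbjne (hev i j h1i hij hjm)
  -- local structure of each factor
  set μ : ℕ → ℕ := fun ℓ => if b ℓ = 0 then e else min e (b ℓ).natTrailingDegree with hμ
  have hμle : ∀ ℓ, μ ℓ ≤ e := by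
    intro ℓ; rw [hμ]; dsimp only; split
    · exact le_refl e
    · exact min_le_left _ _
  have hdvd : ∀ ℓ, ∃ β, b ℓ = X ^ μ ℓ * β := by
    intro ℓ
    by_cases h0 : b ℓ = 0
    · exact ⟨0, by rw [h0, mul_zero]⟩
    · have hμℓ : μ ℓ ≤ (b ℓ).natTrailingDegree := by
        rw [hμ]; dsimp only; rw [if_neg h0]; exact min_le_right _ _
      obtain ⟨g, hg⟩ := (X_pow_dvd_iff).mpr
        (fun t ht => coeff_eq_zero_of_lt_natTrailingDegree (lt_of_lt_of_le ht hμℓ))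
      exact ⟨g, hg⟩
  choose β hβ using hdvd
  have hcoeffβ : ∀ ℓ, (b ℓ).coeff (μ ℓ) = (β ℓ).coeff 0 := by
    intro ℓ
    conv_lhs => rw [hβ ℓ]
    simpa using coeff_X_pow_mul (β ℓ) (μ ℓ) 0
  set g : ℕ → Polynomial (Polynomial ℝ) :=
    fun ℓ => Polynomial.C ((X : Polynomial ℝ) ^ (e - μ ℓ)) * Polynomial.X - Polynomial.C (β ℓ)
    with hg
  have key1 : ∀ ℓ, Polynomial.C ((X : Polynomial ℝ) ^ e) * Polynomial.X - Polynomial.C (b ℓ)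
      = Polynomial.C ((X : Polynomial ℝ) ^ μ ℓ) * g ℓ := by
    intro ℓ
    rw [hg]; dsimp only
    rw [mul_sub, ← mul_assoc, ← C_mul, ← pow_add, ← C_mul, ← hβ ℓ,
      show μ ℓ + (e - μ ℓ) = e by have := hμle ℓ; omega]
  -- sign analysis of factors at x = 0
  set εφ : Polynomial ℝ →+* ℝ := evalRingHom (0:ℝ) with hεφ
  have hmap : ∀ ℓ, (g ℓ).map εφ
      = Polynomial.C (((X : Polynomial ℝ) ^ (e - μ ℓ)).eval 0) * Polynomial.X
        - Polynomial.C ((β ℓ).eval 0) := by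
    intro ℓ
    rw [hg]; dsimp only
    rw [Polynomial.map_sub, Polynomial.map_mul, map_C, map_X]
    rw [hεφ]
    simp only [coe_evalRingHom, map_C, eval_C]
  have key2 : ∀ ℓ ∈ I, ∃ s : ℝ, s ≠ 0 ∧
      ∀ u ∈ Set.Ioo (0:ℝ) c, 0 < s * ((g ℓ).map εφ).eval u := by
    intro ℓ hℓI
    rw [hI, Finset.mem_Icc] at hℓI
    by_cases h0 : b ℓ = 0
    · have hβ0 : β ℓ = 0 := by
        have h1 := hβ ℓ
        rw [h0] at h1
        exact ((mul_eq_zero.mp h1.symm).resolve_left (pow_ne_zero _ X_ne_zero))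
      refine ⟨1, one_ne_zero, fun u hu => ?_⟩
      rw [hmap, hβ0]
      simp only [map_zero, sub_zero, eval_mul, eval_C, eval_X, eval_pow, one_mul]
      have hμℓ : μ ℓ = e := by rw [hμ]; dsimp only; rw [if_pos h0]
      rw [hμℓ, Nat.sub_self]
      simpa using hu.1
    · -- b ℓ ≠ 0
      by_cases hcase : (b ℓ).natTrailingDegree < e
      · -- low order: the factor is a nonzero constant at x = 0
        have hμℓ : μ ℓ = (b ℓ).natTrailingDegree := by
          rw [hμ]; dsimp only; rw [if_neg h0]; omega
        have hpow : ((X : Polynomial ℝ) ^ (e - μ ℓ)).eval 0 = 0 := by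
          rw [eval_pow, eval_X]; exact zero_pow (by omega)
        have htc : (β ℓ).eval 0 = (b ℓ).trailingCoeff := by
          rw [← coeff_zero_eq_eval_zero, ← hcoeffβ ℓ, hμℓ, trailingCoeff]
        have htne : (b ℓ).trailingCoeff ≠ 0 := trailingCoeff_nonzero_iff_nonzero.mpr h0
        refine ⟨-((b ℓ).trailingCoeff)⁻¹, by simpa using htne, fun u hu => ?_⟩
        rw [hmap, hpow, htc]
        simp only [map_zero, zero_mul, eval_sub, eval_mul, eval_C, eval_X, eval_zero]
        rw [zero_sub, neg_mul_neg, inv_mul_cancel₀ htne]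
        norm_num
      · -- high order: the factor is (u - cℓ) at x = 0 with cℓ ∉ (0, c)
        push_neg at hcase
        have hμℓ : μ ℓ = e := by rw [hμ]; dsimp only; rw [if_neg h0]; omega
        have hpow : ((X : Polynomial ℝ) ^ (e - μ ℓ)).eval 0 = 1 := by
          rw [hμℓ, Nat.sub_self, pow_zero, eval_one]
        have hcβ : (β ℓ).eval 0 = (b ℓ).coeff e := by
          rw [← coeff_zero_eq_eval_zero, ← hcoeffβ ℓ, hμℓ]
        have hsign : (b ℓ).coeff e ≤ 0 ∨ c ≤ (b ℓ).coeff e := by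
          rcases lt_trichotomy ℓ i with hli | rfl | hgt
          · -- ℓ < i : b ℓ is eventually negative
            left
            rcases eq_or_lt_of_le hcase with heq | hlt
            · have hbneg : 0 < (-(b ℓ)).trailingCoeff := by
                refine trailingCoeff_pos_of_eventually_pos (by simpa using h0) ?_
                have h5 := hev ℓ i hℓI.1 hli (by omega)
                have h6 : -(b ℓ) = a i - a ℓ := by rw [hb]; ring
                rw [h6]; exact h5
              have h7 : (-(b ℓ)).trailingCoeff = -((b ℓ).coeff e) := by
                rw [trailingCoeff, natTrailingDegree_neg, ← heq, coeff_neg]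
              rw [h7] at hbneg; linarith
            · rw [coeff_eq_zero_of_lt_natTrailingDegree hlt]
          · exact absurd (by rw [hb]; dsimp only; rw [sub_self]) h0
          · rcases le_or_gt ℓ k with hlk | hkl
            · -- i < ℓ ≤ k
              left
              have h8 : (b ℓ).coeff e = 0 := by
                show (a ℓ - a i).coeff e = 0
                refine hvan i ℓ e (by omega) (fun l hl => ?_)
                rw [Finset.mem_Ico] at hl
                exact hkuniq l (Finset.mem_Ico.mpr ⟨hl.1, by omega⟩) (by omega)
              rw [h8]
            · rcases le_or_gt ℓ j with hlj | hjl
              · -- k < ℓ ≤ j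
                right
                have h9 : (a j - a ℓ).coeff e = 0 := by
                  refine hvan ℓ j e hlj (fun l hl => ?_)
                  rw [Finset.mem_Ico] at hl
                  exact hkuniq l (Finset.mem_Ico.mpr ⟨by omega, hl.2⟩) (by omega)
                have h10 : c = (b ℓ).coeff e + (a j - a ℓ).coeff e := by
                  rw [hc, ← coeff_add]
                  congr 1
                  show a j - a i = (a ℓ - a i) + (a j - a ℓ)
                  ring
                rw [h10, h9, add_zero]
              · -- j < ℓ
                right
                have hfne : a ℓ - a j ≠ 0 := hne j ℓ (by omega) hjl hℓI.2
                have hfd : e ≤ (a ℓ - a j).natTrailingDegree := by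
                  by_contra hcon
                  push_neg at hcon
                  have h11 : (b ℓ).coeff ((a ℓ - a j).natTrailingDegree)
                      = (b j).coeff ((a ℓ - a j).natTrailingDegree)
                        + (a ℓ - a j).coeff ((a ℓ - a j).natTrailingDegree) := by
                    rw [← coeff_add]
                    congr 1
                    show a ℓ - a i = (a j - a i) + (a ℓ - a j)
                    ring
                  rw [hbj_low _ hcon, zero_add] at h11
                  have h12 : (b ℓ).coeff ((a ℓ - a j).natTrailingDegree) ≠ 0 := by
                    rw [h11]; exact trailingCoeff_nonzero_iff_nonzero.mpr hfne
                  have h13 := natTrailingDegree_le_of_ne_zero h12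
                  omega
                have hfe : 0 ≤ (a ℓ - a j).coeff e := by
                  rcases eq_or_lt_of_le hfd with heq | hlt
                  · have hpos : 0 < (a ℓ - a j).trailingCoeff :=
                      trailingCoeff_pos_of_eventually_pos hfne (hev j ℓ (by omega) hjl hℓI.2)
                    rw [trailingCoeff, ← heq] at hpos
                    linarith
                  · rw [coeff_eq_zero_of_lt_natTrailingDegree hlt]
                have h14 : (b ℓ).coeff e = c + (a ℓ - a j).coeff e := by
                  rw [hc, ← coeff_add]
                  congr 1
                  show a ℓ - a i = (a j - a i) + (a ℓ - a j)
                  ring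
                rw [h14]; linarith
        rcases hsign with hle | hge
        · refine ⟨1, one_ne_zero, fun u hu => ?_⟩
          rw [hmap, hpow, hcβ]
          simp only [map_one, one_mul, eval_sub, eval_X, eval_C]
          have := hu.1
          linarith
        · refine ⟨-1, by norm_num, fun u hu => ?_⟩
          rw [hmap, hpow, hcβ]
          simp only [map_one, one_mul, eval_sub, eval_X, eval_C]
          have := hu.2
          nlinarith
  -- assemble the product identity
  set M : ℕ := ∑ ℓ ∈ I, μ ℓ with hM
  set G : Polynomial (Polynomial ℝ) := ∏ ℓ ∈ I, g ℓ with hG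
  have keyProd : (∏ ℓ ∈ I, (Polynomial.C ((X : Polynomial ℝ) ^ e) * Polynomial.X
        - Polynomial.C (b ℓ)))
      = Polynomial.C ((X : Polynomial ℝ) ^ M) * G := by
    rw [Finset.prod_congr rfl (fun ℓ _ => key1 ℓ), Finset.prod_mul_distrib]
    congr 1
    rw [← map_prod, Finset.prod_pow_eq_pow_sum]
  set Pb : Polynomial (Polynomial ℝ) := ∏ ℓ ∈ I, (Polynomial.X - Polynomial.C (b ℓ)) with hPb
  set 𝒮 : Polynomial (Polynomial ℝ) := antider Pb with h𝒮
  set T : Polynomial (Polynomial ℝ) := antider G with hT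
  have claimC : 𝒮.comp (Polynomial.C ((X : Polynomial ℝ) ^ e) * Polynomial.X)
      = Polynomial.C ((X : Polynomial ℝ) ^ (e + M)) * T := by
    apply eq_of_deriv_eq
    · rw [derivative_comp, h𝒮, derivative_antider, hPb, Polynomial.prod_comp]
      have h1 : ∀ ℓ ∈ I, (Polynomial.X - Polynomial.C (b ℓ)).comp
          (Polynomial.C ((X : Polynomial ℝ) ^ e) * Polynomial.X)
          = Polynomial.C ((X : Polynomial ℝ) ^ e) * Polynomial.X - Polynomial.C (b ℓ) := by
        intro ℓ _
        rw [sub_comp, X_comp, C_comp]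
      rw [Finset.prod_congr rfl h1, keyProd, derivative_mul, derivative_C, zero_mul, zero_add,
        derivative_mul, derivative_C, zero_mul, zero_add, derivative_X, mul_one, hT,
        derivative_antider, pow_add, C_mul]
      ring
    · rw [coeff_zero_eq_eval_zero, coeff_zero_eq_eval_zero, eval_comp, eval_mul, eval_C, eval_X,
        mul_zero, h𝒮, eval_zero_antider, eval_mul, hT, eval_zero_antider, mul_zero]
  -- shift identity
  set Porig : Polynomial (Polynomial ℝ) := ∏ ℓ ∈ I, (Polynomial.X - Polynomial.C (a ℓ))
    with hPorig
  set Sorig : Polynomial (Polynomial ℝ) := antider Porig with hSorig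
  set P₁ : Polynomial (Polynomial ℝ) := Sorig.comp (Polynomial.X + Polynomial.C (a i)) with hP₁
  have hP₁S : P₁ = 𝒮 + Polynomial.C (Sorig.eval (a i)) := by
    apply eq_of_deriv_eq
    · rw [hP₁, derivative_comp, hSorig, derivative_antider, derivative_add, derivative_X,
        derivative_C, add_zero, one_mul, hPorig, Polynomial.prod_comp, derivative_add,
        derivative_C, add_zero, h𝒮, derivative_antider, hPb]
      refine Finset.prod_congr rfl fun ℓ _ => ?_
      rw [sub_comp, X_comp, C_comp, hb]
      dsimp only
      rw [C_sub]
      ring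
    · rw [coeff_add, coeff_zero_eq_eval_zero, coeff_zero_eq_eval_zero, hP₁, eval_comp, eval_add,
        eval_X, eval_C, zero_add, h𝒮, eval_zero_antider, zero_add, coeff_C_zero]
  have hμj : μ j = e := by
    rw [hμ]; dsimp only; rw [if_neg hbjne, hbjntd, min_self]
  have hGval : Sorig.eval (a j) - Sorig.eval (a i)
      = (X : Polynomial ℝ) ^ (e + M) * T.eval (β j) := by
    have h1 : Sorig.eval (a j) = P₁.eval (b j) := by
      rw [hP₁, eval_comp, eval_add, eval_X, eval_C, hb]
      dsimp only
      rw [sub_add_cancel]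
    rw [h1, hP₁S, eval_add, eval_C, add_sub_cancel_right]
    have h2 : 𝒮.eval (b j) = (𝒮.comp (Polynomial.C ((X : Polynomial ℝ) ^ e) * Polynomial.X)).eval
        (β j) := by
      rw [eval_comp, eval_mul, eval_C, eval_X]
      congr 1
      rw [← hμj]
      exact hβ j
    rw [h2, claimC, eval_mul, eval_C]
  -- nonvanishing at x = 0
  have hβj0 : εφ (β j) = c := by
    show (β j).eval 0 = c
    rw [← coeff_zero_eq_eval_zero, ← hcoeffβ j, hμj, hc]
  set g₀ : Polynomial ℝ := ∏ ℓ ∈ I, (g ℓ).map εφ with hg₀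
  have hsign : ∃ s : ℝ, s ≠ 0 ∧ ∀ u ∈ Set.Ioo (0:ℝ) c, 0 < s * g₀.eval u := by
    rw [hg₀]
    refine Finset.prod_induction (fun ℓ => (g ℓ).map εφ)
      (fun q => ∃ s : ℝ, s ≠ 0 ∧ ∀ u ∈ Set.Ioo (0:ℝ) c, 0 < s * q.eval u) ?_ ?_ key2
    · rintro p q ⟨s1, hs1, h1⟩ ⟨s2, hs2, h2⟩
      refine ⟨s1 * s2, mul_ne_zero hs1 hs2, fun u hu => ?_⟩
      rw [eval_mul]
      have := h1 u hu
      have := h2 u hu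
      nlinarith
    · exact ⟨1, one_ne_zero, fun u hu => by simp⟩
  obtain ⟨s, hs0, hspos⟩ := hsign
  have hint : (0:ℝ) < ∫ u in (0:ℝ)..c, s * g₀.eval u := by
    refine intervalIntegral.intervalIntegral_pos_of_pos_on ?_ hspos hcpos
    exact (continuous_const.mul g₀.continuous).intervalIntegrable _ _
  have hint2 : (antider g₀).eval c ≠ 0 := by
    intro h
    rw [intervalIntegral.integral_const_mul, integral_eval, eval_zero_antider, sub_zero, h,
      mul_zero] at hint
    exact lt_irrefl 0 hint
  have hTβ : T.eval (β j) ≠ 0 := by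
    intro h
    have h3 : εφ (T.eval (β j)) = (antider g₀).eval c := by
      rw [hom_eval, hβj0, hT, antider_map, Polynomial.map_prod, hg₀]
    rw [h, map_zero] at h3
    exact hint2 h3.symm
  intro heq
  have h4 : Sorig.eval (a j) - Sorig.eval (a i) = 0 := by
    rw [hSorig, hPorig] at *
    rw [heq, sub_self]
  rw [hGval] at h4
  exact (mul_ne_zero (pow_ne_zero _ X_ne_zero) hTβ) h4



end AuxMorse

theorem chain_lt_s11 (f : ℕ → ℝ) (m : ℕ) (h : ∀ l, 1 ≤ l → l ≤ m → f l < f (l+1)) :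
    ∀ p q, 1 ≤ p → p < q → q ≤ m + 1 → f p < f q := by
  intro p q h1 h2
  induction q, h2 using Nat.le_induction with
  | base => intro h3; exact h p h1 (by omega)
  | succ q hq ih =>
    intro h3
    have h4 := h q (by omega) (by omega)
    rcases Nat.lt_or_ge p q with h5 | h5
    · exact lt_trans (ih (by omega)) h4
    · have : p = q := by omega
      rw [this]; exact h4

theorem stmt_11 (m : ℕ) (hm : 1 ≤ m) (a : ℕ → Polynomial ℝ)
    (hzero : ∀ i, 1 ≤ i → i ≤ m + 1 → (a i).eval 0 = 0)
    (hchain : ∀ i, 1 ≤ i → i ≤ m → PrecPlus (a i) (a (i + 1)))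
    (hbin : ∀ i j, 1 ≤ i → i < j → j ≤ m + 1 →
      ∃ k ∈ Finset.Ico i j, ∀ ℓ ∈ Finset.Ico i j, ℓ ≠ k →
        rootMultiplicity 0 (a (k + 1) - a k) < rootMultiplicity 0 (a (ℓ + 1) - a ℓ)) :
    ∃ x₀ > (0 : ℝ), ∀ x : ℝ, 0 < x → x < x₀ →
      (∀ i j, 1 ≤ i → i < j → j ≤ m + 1 → (a i).eval x < (a j).eval x) ∧
      ∀ Q : ℝ → ℝ,
        (∀ y : ℝ, Q y =
          ∫ t in (0 : ℝ)..y, ∏ ℓ ∈ Finset.Icc 1 (m + 1), (t - (a ℓ).eval x)) →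
        (∀ y : ℝ, deriv Q y = 0 ↔ ∃ ℓ, 1 ≤ ℓ ∧ ℓ ≤ m + 1 ∧ y = (a ℓ).eval x) ∧
        (∀ ℓ, 1 ≤ ℓ → ℓ ≤ m + 1 → deriv (deriv Q) ((a ℓ).eval x) ≠ 0) ∧
        (∀ i j, 1 ≤ i → i < j → j ≤ m + 1 →
          Q ((a i).eval x) ≠ Q ((a j).eval x)) ∧
        ∃ R : Polynomial ℝ, R.Monic ∧ R.natDegree = m + 2 ∧
          ∀ y : ℝ, R.eval y = (m + 2 : ℝ) * Q y := by
  classical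
  have hch : ∀ᶠ x in nhdsWithin (0:ℝ) (Set.Ioi 0),
      ∀ l ∈ Finset.Icc 1 m, (a l).eval x < (a (l+1)).eval x := by
    rw [Filter.eventually_all_finset]
    intro l hl
    rw [Finset.mem_Icc] at hl
    obtain ⟨x₀, hx₀, h⟩ := hchain l hl.1 hl.2
    have hmem : Set.Ioo (0:ℝ) x₀ ∈ nhdsWithin (0:ℝ) (Set.Ioi 0) :=
      Ioo_mem_nhdsGT_of_mem ⟨le_refl 0, hx₀⟩
    filter_upwards [hmem] with x hx using h x hx.1 hx.2
  have hev : ∀ p q, 1 ≤ p → p < q → q ≤ m + 1 →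
      ∀ᶠ x in nhdsWithin (0:ℝ) (Set.Ioi 0), 0 < (a q - a p).eval x := by
    intro p q h1 h2 h3
    filter_upwards [hch] with x hx
    have := chain_lt_s11 (fun ℓ => (a ℓ).eval x) m
      (fun l hl1 hl2 => hx l (Finset.mem_Icc.mpr ⟨hl1, hl2⟩)) p q h1 h2 h3
    rw [eval_sub]
    linarith
  set Sorig : Polynomial (Polynomial ℝ) :=
    antider (∏ ℓ ∈ Finset.Icc 1 (m+1), (Polynomial.X - Polynomial.C (a ℓ))) with hSorig
  have hGev : ∀ᶠ x in nhdsWithin (0:ℝ) (Set.Ioi 0),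
      ∀ i ∈ Finset.Icc 1 (m+1), ∀ j ∈ Finset.Icc 1 (m+1), i < j →
      (Sorig.eval (a j) - Sorig.eval (a i)).eval x ≠ 0 := by
    rw [Filter.eventually_all_finset]
    intro i hi
    rw [Filter.eventually_all_finset]
    intro j hj
    rcases Nat.lt_or_ge i j with hij | hij
    · rw [Finset.mem_Icc] at hi hj
      have hbin' : ∃ k ∈ Finset.Ico i j, ∀ ℓ ∈ Finset.Ico i j, ℓ ≠ k →
          (a (k+1) - a k).natTrailingDegree < (a (ℓ+1) - a ℓ).natTrailingDegree := by
        obtain ⟨k, hk1, hk2⟩ := hbin i j hi.1 hij hj.2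
        refine ⟨k, hk1, fun ℓ hℓ hne => ?_⟩
        have := hk2 ℓ hℓ hne
        rwa [rootMultiplicity_eq_natTrailingDegree', rootMultiplicity_eq_natTrailingDegree']
          at this
      have hne0 : Sorig.eval (a j) - Sorig.eval (a i) ≠ 0 :=
        sub_ne_zero.mpr (core m i j a hi.1 hij hj.2 hev hbin')
      filter_upwards [eventually_ne_zero_of_ne hne0] with x hx
      intro _
      exact hx
    · filter_upwards with x h
      omega
  obtain ⟨x₀, hx₀pos, hsub⟩ := mem_nhdsGT_iff_exists_Ioo_subset.mp
    ((hch.and hGev) : _ ∈ nhdsWithin (0:ℝ) (Set.Ioi 0))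
  refine ⟨x₀, hx₀pos, fun x hx1 hx2 => ?_⟩
  obtain ⟨hchx, hGx⟩ := hsub ⟨hx1, hx2⟩
  have hr : ∀ i j, 1 ≤ i → i < j → j ≤ m + 1 → (a i).eval x < (a j).eval x :=
    fun i j h1 h2 h3 => chain_lt_s11 (fun ℓ => (a ℓ).eval x) m
      (fun l hl1 hl2 => hchx l (Finset.mem_Icc.mpr ⟨hl1, hl2⟩)) i j h1 h2 h3
  refine ⟨hr, fun Q hQ => ?_⟩
  obtain ⟨hQS, hiff, hsec, hR⟩ := Q_props m hm (fun ℓ => (a ℓ).eval x) hr Q hQ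
  refine ⟨hiff, hsec, ?_, hR⟩
  intro i j h1 h2 h3
  have hcomm : ∀ p : ℕ,
      (antider (∏ ℓ ∈ Finset.Icc 1 (m+1),
        (Polynomial.X - Polynomial.C ((a ℓ).eval x)))).eval ((a p).eval x)
      = (Sorig.eval (a p)).eval x := by
    intro p
    have h4 := hom_eval (evalRingHom x) Sorig (a p)
    have h5 : Sorig.map (evalRingHom x)
        = antider (∏ ℓ ∈ Finset.Icc 1 (m+1),
            (Polynomial.X - Polynomial.C ((a ℓ).eval x))) := by
      rw [hSorig, antider_map, Polynomial.map_prod]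
      congr 1
      refine Finset.prod_congr rfl fun ℓ _ => ?_
      rw [Polynomial.map_sub, map_X, map_C]
      simp only [coe_evalRingHom]
    rw [h5] at h4
    simp only [coe_evalRingHom] at h4
    rw [← h4]
  intro heq
  have h6 : (Sorig.eval (a j) - Sorig.eval (a i)).eval x = 0 := by
    rw [eval_sub, ← hcomm j, ← hcomm i, ← hQS ((a j).eval x), ← hQS ((a i).eval x), heq,
      sub_self]
  exact hGx i (Finset.mem_Icc.mpr ⟨h1, by omega⟩) j (Finset.mem_Icc.mpr ⟨by omega, h3⟩) h2 h6
end

section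
/- Let T be a sign tree with n leaves. Then the permutation perm(T) of {1,…,n} is alternating (a snake) if and only if the in-order sign list signs(T) alternates, i.e., every two consecutive entries of signs(T) are different. -/
def permDirectSum {p q : ℕ} (π : Equiv.Perm (Fin p)) (τ : Equiv.Perm (Fin q)) :
    Equiv.Perm (Fin (p + q)) :=
  finSumFinEquiv.symm.trans ((Equiv.sumCongr π τ).trans finSumFinEquiv)

def permSkewSum {p q : ℕ} (π : Equiv.Perm (Fin p)) (τ : Equiv.Perm (Fin q)) :
    Equiv.Perm (Fin (p + q)) :=
  finSumFinEquiv.symm.trans ((Equiv.sumCongr π τ).trans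
    ((Equiv.sumComm (Fin p) (Fin q)).trans (finSumFinEquiv.trans (finCongr (Nat.add_comm q p)))))

/-- A sign tree: a complete binary tree whose internal nodes carry a sign
(`true` = ⊕, `false` = ⊖). -/
inductive SignTree : Type
  | leaf : SignTree
  | node : Bool → SignTree → SignTree → SignTree

/-- Number of leaves of a sign tree. -/
def SignTree.leaves : SignTree → ℕ
  | .leaf => 1
  | .node _ L R => L.leaves + R.leaves

/-- The permutation encoded by a sign tree. -/
def SignTree.perm : (T : SignTree) → Equiv.Perm (Fin T.leaves)
  | .leaf => Equiv.refl _
  | .node s L R =>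
      if s then permDirectSum L.perm R.perm else permSkewSum L.perm R.perm

/-- The in-order list of signs of a sign tree. -/
def SignTree.signs : SignTree → List Bool
  | .leaf => []
  | .node s L R => L.signs ++ s :: R.signs

/-- The sign of the internal node where the paths to the `i`-th and `j`-th leaves
(1-based, `i < j`) separate. -/
def SignTree.meetSign : SignTree → ℕ → ℕ → Bool
  | .leaf, _, _ => true
  | .node s L R, i, j =>
      if j ≤ L.leaves then L.meetSign i j
      else if i ≤ L.leaves then s
      else R.meetSign (i - L.leaves) (j - L.leaves)


/-- A permutation is alternating (a snake) iff consecutive comparisons alternate. -/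
def IsAlternating {n : ℕ} (σ : Equiv.Perm (Fin n)) : Prop :=
  ∀ i : ℕ, ∀ h2 : i + 2 < n,
    (σ ⟨i, by omega⟩ < σ ⟨i + 1, by omega⟩ ↔ σ ⟨i + 2, h2⟩ < σ ⟨i + 1, by omega⟩)

lemma aux_symm_left {p q : ℕ} (i : Fin (p+q)) (h : (i:ℕ) < p) :
    (finSumFinEquiv.symm i : Fin p ⊕ Fin q) = Sum.inl ⟨i, h⟩ := by
  rw [Equiv.symm_apply_eq]; exact Fin.ext (by simp)

lemma aux_symm_right {p q : ℕ} (i : Fin (p+q)) (h : p ≤ (i:ℕ)) :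
    (finSumFinEquiv.symm i : Fin p ⊕ Fin q) = Sum.inr ⟨i - p, by omega⟩ := by
  rw [Equiv.symm_apply_eq]; exact Fin.ext (by simp; omega)

lemma aux_ds_left {p q : ℕ} (π : Equiv.Perm (Fin p)) (τ : Equiv.Perm (Fin q))
    (i : Fin (p+q)) (h : (i:ℕ) < p) :
    (permDirectSum π τ i : ℕ) = π ⟨i, h⟩ := by
  simp [permDirectSum, aux_symm_left i h]

lemma aux_ds_right {p q : ℕ} (π : Equiv.Perm (Fin p)) (τ : Equiv.Perm (Fin q))
    (i : Fin (p+q)) (h : p ≤ (i:ℕ)) :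
    (permDirectSum π τ i : ℕ) = p + τ ⟨i - p, by omega⟩ := by
  simp [permDirectSum, aux_symm_right i h]

lemma aux_ss_left {p q : ℕ} (π : Equiv.Perm (Fin p)) (τ : Equiv.Perm (Fin q))
    (i : Fin (p+q)) (h : (i:ℕ) < p) :
    (permSkewSum π τ i : ℕ) = q + π ⟨i, h⟩ := by
  simp [permSkewSum, aux_symm_left i h]; omega

lemma aux_ss_right {p q : ℕ} (π : Equiv.Perm (Fin p)) (τ : Equiv.Perm (Fin q))
    (i : Fin (p+q)) (h : p ≤ (i:ℕ)) :
    (permSkewSum π τ i : ℕ) = τ ⟨i - p, by omega⟩ := by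
  simp [permSkewSum, aux_symm_right i h]

lemma aux_signs_len (T : SignTree) : T.signs.length + 1 = T.leaves := by
  induction T with
  | leaf => rfl
  | node s L R ihL ihR => simp [SignTree.signs, SignTree.leaves]; omega

lemma aux_ds_left' {p q : ℕ} (π : Equiv.Perm (Fin p)) (τ : Equiv.Perm (Fin q))
    (i : ℕ) (hi : i < p + q) (h : i < p) :
    (permDirectSum π τ ⟨i, hi⟩ : ℕ) = π ⟨i, h⟩ :=
  aux_ds_left π τ ⟨i, hi⟩ h

lemma aux_ds_right' {p q : ℕ} (π : Equiv.Perm (Fin p)) (τ : Equiv.Perm (Fin q))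
    (i j : ℕ) (hi : i < p + q) (hj : j < q) (e : i = p + j) :
    (permDirectSum π τ ⟨i, hi⟩ : ℕ) = p + τ ⟨j, hj⟩ := by
  rw [aux_ds_right π τ ⟨i, hi⟩ (show p ≤ i by omega)]
  congr 1
  exact congrArg (fun x : Fin q => ((τ x : Fin q) : ℕ))
    (Fin.ext (by simp only [Fin.val_mk]; omega))

lemma aux_ss_left' {p q : ℕ} (π : Equiv.Perm (Fin p)) (τ : Equiv.Perm (Fin q))
    (i : ℕ) (hi : i < p + q) (h : i < p) :
    (permSkewSum π τ ⟨i, hi⟩ : ℕ) = q + π ⟨i, h⟩ :=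
  aux_ss_left π τ ⟨i, hi⟩ h

lemma aux_ss_right' {p q : ℕ} (π : Equiv.Perm (Fin p)) (τ : Equiv.Perm (Fin q))
    (i j : ℕ) (hi : i < p + q) (hj : j < q) (e : i = p + j) :
    (permSkewSum π τ ⟨i, hi⟩ : ℕ) = τ ⟨j, hj⟩ := by
  rw [aux_ss_right π τ ⟨i, hi⟩ (show p ≤ i by omega)]
  exact congrArg (fun x : Fin q => ((τ x : Fin q) : ℕ))
    (Fin.ext (by simp only [Fin.val_mk]; omega))

lemma aux_key (T : SignTree) : ∀ (i : ℕ) (h : i + 1 < T.leaves),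
    (T.perm ⟨i, Nat.lt_of_succ_lt h⟩ < T.perm ⟨i+1, h⟩ ↔
      T.signs[i]'(by have := aux_signs_len T; omega) = true) := by
  induction T with
  | leaf => intro i h; simp [SignTree.leaves] at h
  | node s L R ihL ihR =>
    intro i h
    have hlenL : L.signs.length + 1 = L.leaves := aux_signs_len L
    have hlenR : R.signs.length + 1 = R.leaves := aux_signs_len R
    have hlv : (SignTree.node s L R).leaves = L.leaves + R.leaves := rfl
    rw [Fin.lt_def]
    rcases lt_trichotomy (i+1) L.leaves with h1 | h1 | h1
    · -- both in the left block
      have hsg : (SignTree.node s L R).signs[i]'(by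
            have := aux_signs_len (SignTree.node s L R); omega) =
          L.signs[i]'(by omega) := by
        show (L.signs ++ s :: R.signs)[i]'_ = _
        exact List.getElem_append_left (by omega)
      rw [hsg, ← ihL i h1, Fin.lt_def]
      cases s with
      | true =>
        show ((permDirectSum L.perm R.perm) ⟨i, _⟩ : ℕ) <
            ((permDirectSum L.perm R.perm) ⟨i+1, _⟩ : ℕ) ↔ _
        rw [aux_ds_left' L.perm R.perm i (Nat.lt_of_succ_lt h) (by omega),
          aux_ds_left' L.perm R.perm (i+1) h (by omega)]
      | false =>
        show ((permSkewSum L.perm R.perm) ⟨i, _⟩ : ℕ) <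
            ((permSkewSum L.perm R.perm) ⟨i+1, _⟩ : ℕ) ↔ _
        rw [aux_ss_left' L.perm R.perm i (Nat.lt_of_succ_lt h) (by omega),
          aux_ss_left' L.perm R.perm (i+1) h (by omega)]
        exact add_lt_add_iff_left _
    · -- straddling: i is the last leaf of L, i+1 the first of R
      have hsg : (SignTree.node s L R).signs[i]'(by
            have := aux_signs_len (SignTree.node s L R); omega) = s := by
        show (L.signs ++ s :: R.signs)[i]'_ = _
        refine (List.getElem_append_right (by omega)).trans ?_
        simp [show i - L.signs.length = 0 by omega]
      rw [hsg]
      cases s with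
      | true =>
        show ((permDirectSum L.perm R.perm) ⟨i, _⟩ : ℕ) <
            ((permDirectSum L.perm R.perm) ⟨i+1, _⟩ : ℕ) ↔ _
        rw [aux_ds_left' L.perm R.perm i (Nat.lt_of_succ_lt h) (by omega),
          aux_ds_right' L.perm R.perm (i+1) 0 h (by omega) (by omega)]
        simp
        exact lt_of_lt_of_le (Fin.is_lt _) (Nat.le_add_right _ _)
      | false =>
        show ((permSkewSum L.perm R.perm) ⟨i, _⟩ : ℕ) <
            ((permSkewSum L.perm R.perm) ⟨i+1, _⟩ : ℕ) ↔ _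
        rw [aux_ss_left' L.perm R.perm i (Nat.lt_of_succ_lt h) (by omega),
          aux_ss_right' L.perm R.perm (i+1) 0 h (by omega) (by omega)]
        simp
        exact le_trans (Fin.is_lt _).le (Nat.le_add_right _ _)
    · -- both in the right block
      have hR2 : (i - L.leaves) + 1 < R.leaves := by omega
      have hsg : (SignTree.node s L R).signs[i]'(by
            have := aux_signs_len (SignTree.node s L R); omega) =
          R.signs[i - L.leaves]'(by omega) := by
        show (L.signs ++ s :: R.signs)[i]'_ = _
        refine (List.getElem_append_right (by omega)).trans ?_
        have e : i - L.signs.length = (i - L.leaves) + 1 := by omega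
        simp [e]
      rw [hsg, ← ihR (i - L.leaves) hR2, Fin.lt_def]
      cases s with
      | true =>
        show ((permDirectSum L.perm R.perm) ⟨i, _⟩ : ℕ) <
            ((permDirectSum L.perm R.perm) ⟨i+1, _⟩ : ℕ) ↔ _
        rw [aux_ds_right' L.perm R.perm i (i - L.leaves) (Nat.lt_of_succ_lt h) (by omega) (by omega),
          aux_ds_right' L.perm R.perm (i+1) ((i - L.leaves) + 1) h (by omega) (by omega)]
        exact add_lt_add_iff_left _
      | false =>
        show ((permSkewSum L.perm R.perm) ⟨i, _⟩ : ℕ) <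
            ((permSkewSum L.perm R.perm) ⟨i+1, _⟩ : ℕ) ↔ _
        rw [aux_ss_right' L.perm R.perm i (i - L.leaves) (Nat.lt_of_succ_lt h) (by omega) (by omega),
          aux_ss_right' L.perm R.perm (i+1) ((i - L.leaves) + 1) h (by omega) (by omega)]
lemma aux_lt_iff_not_lt {n : ℕ} {a b : Fin n} (h : a ≠ b) : a < b ↔ ¬ b < a := by
  have h' : (a : ℕ) ≠ (b : ℕ) := fun e => h (Fin.ext e)
  rw [Fin.lt_def, Fin.lt_def]
  omega


lemma aux_bool {x y : Bool} {P Q : Prop} (h1 : P ↔ x = true) (h2 : Q ↔ y = true)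
    (h : P ↔ ¬ Q) : x ≠ y := by
  cases x <;> cases y <;> simp_all

lemma aux_bool2 {x y : Bool} (h : x ≠ y) : x = true ↔ ¬ (y = true) := by
  cases x <;> cases y <;> simp_all

theorem stmt_12 (T : SignTree) :
    IsAlternating T.perm ↔ List.Chain' (· ≠ ·) T.signs := by
  have hlen := aux_signs_len T
  rw [List.Chain', List.isChain_iff_getElem]
  constructor
  · intro hA i hi
    have h2 : i + 2 < T.leaves := by omega
    have hiff := hA i h2
    have k1 := aux_key T i (by omega)
    have k2 := aux_key T (i+1) (by omega)
    have hne : T.perm ⟨i+1, by omega⟩ ≠ T.perm ⟨i+2, h2⟩ := by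
      intro hc
      have h3 := T.perm.injective hc
      rw [Fin.mk.injEq] at h3
      omega
    exact aux_bool k1 k2 (hiff.trans (aux_lt_iff_not_lt hne.symm))
  · intro hC i h2
    have hi : i + 1 < T.signs.length := by omega
    have hne' := hC i hi
    have k1 := aux_key T i (by omega)
    have k2 := aux_key T (i+1) (by omega)
    have hne : T.perm ⟨i+1, by omega⟩ ≠ T.perm ⟨i+2, h2⟩ := by
      intro hc
      have h3 := T.perm.injective hc
      rw [Fin.mk.injEq] at h3
      omega
    have hPQ := k1.trans ((aux_bool2 hne').trans (not_congr k2.symm))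
    exact hPQ.trans (aux_lt_iff_not_lt hne.symm).symm
end
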